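/- There exists a constant C > 0 such that for every n ≥ 1, every totally positive n-by-n real matrix A, and every real number b, the multiplicity of b in A is at most C · n^{4/3}. -/

import Mathlib

/-- An m-by-n real matrix is totally positive if every minor of it
(of every size) is strictly positive. -/
def TotallyPositive {m n : ℕ} (A : Matrix (Fin m) (Fin n) ℝ) : Prop :=
  ∀ (k : ℕ) (f : Fin k → Fin m) (g : Fin k → Fin n),
    StrictMono f → StrictMono g → 0 < (A.submatrix f g).det

open Finset

namespace Stmt4

noncomputable section

/-- An edge: (left row, right row, column id). -/
abbrev Edge := ℕ × ℕ × ℕ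

variable (H : ℕ → ℕ → ℝ)

@[simp] def el (x : Edge) : ℕ := x.1
@[simp] def er (x : Edge) : ℕ := x.2.1
@[simp] def ec (x : Edge) : ℕ := x.2.2

/-- value of edge's column at row i -/
def hv (x : Edge) (i : ℕ) : ℝ := H (ec x) i

/-- edge is alive in the slab between rows s and s+1 -/
def alive (x : Edge) (s : ℕ) : Prop := el x ≤ s ∧ s + 1 ≤ er x

/-- x is below y in slab s (lexicographic on values at rows s, s+1) -/
def lexlt (x y : Edge) (s : ℕ) : Prop :=
  hv H x s < hv H y s ∨ (hv H x s = hv H y s ∧ hv H x (s+1) < hv H y (s+1))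

def indep (x y : Edge) : Prop :=
  el x ≠ el y ∧ el x ≠ er y ∧ er x ≠ el y ∧ er x ≠ er y

def ovl (x y : Edge) : Prop := max (el x) (el y) < min (er x) (er y)

def pp (x y : Edge) : ℕ := max (el x) (el y)
def qq (x y : Edge) : ℕ := min (er x) (er y)

/-- sign-monotonicity: once column of x is weakly below column of y, it is
strictly below at later rows (up to row N). -/
def SM (N : ℕ) (x y : Edge) : Prop :=
  ∀ i i', i < i' → i' ≤ N → hv H x i ≤ hv H y i → hv H x i' < hv H y i'

/-- x,y adjacent in slab s w.r.t. edge set E : x below y and no edge of E strictly between -/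
def adjS (E : Finset Edge) (x y : Edge) (s : ℕ) : Prop :=
  alive x s ∧ alive y s ∧ lexlt H x y s ∧
    ∀ z ∈ E, alive z s → ¬(lexlt H x z s ∧ lexlt H z y s)

variable (b : ℝ)

/-- The hypotheses shared by all edge systems derived from the matrix. -/
structure Pre (E : Finset Edge) (S : Finset ℕ) (N : ℕ) : Prop where
  lr : ∀ x ∈ E, el x < er x
  erN : ∀ x ∈ E, er x ≤ N
  inS : ∀ x ∈ E, el x ∈ S ∧ er x ∈ S
  vl : ∀ x ∈ E, hv H x (el x) = b
  vr : ∀ x ∈ E, hv H x (er x) = b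
  vint : ∀ x ∈ E, ∀ i, el x < i → i < er x → hv H x i ≠ b
  esimp : ∀ x ∈ E, ∀ y ∈ E, el x = el y → er x = er y → x = y
  mono : ∀ x ∈ E, ∀ y ∈ E, ec x ≠ ec y → SM H N x y ∨ SM H N y x
  samecol : ∀ x ∈ E, ∀ y ∈ E, x ≠ y → ec x = ec y → ¬ ovl x y

/-- The hypotheses of the abstract base lemma. -/
structure Good (E : Finset Edge) (S : Finset ℕ) (N : ℕ) : Prop where
  lr : ∀ x ∈ E, el x < er x
  erN : ∀ x ∈ E, er x ≤ N
  inS : ∀ x ∈ E, el x ∈ S ∧ er x ∈ S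
  vl : ∀ x ∈ E, hv H x (el x) = b
  vr : ∀ x ∈ E, hv H x (er x) = b
  vint : ∀ x ∈ E, ∀ i, el x < i → i < er x → hv H x i ≠ b
  esimp : ∀ x ∈ E, ∀ y ∈ E, el x = el y → er x = er y → x = y
  mono : ∀ x ∈ E, ∀ y ∈ E, ec x ≠ ec y → SM H N x y ∨ SM H N y x
  samecol : ∀ x ∈ E, ∀ y ∈ E, x ≠ y → ec x = ec y → ¬ ovl x y
  nocross : ∀ x ∈ E, ∀ y ∈ E, ec x ≠ ec y → indep x y → ovl x y →
      (hv H x (pp x y) < hv H y (pp x y) ↔ hv H x (qq x y) < hv H y (qq x y))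

namespace Good

variable {H} {b} {E : Finset Edge} {S : Finset ℕ} {N : ℕ}

lemma ovl_of_alive {x y : Edge} (hx : alive x s) (hy : alive y s) : ovl x y := by
  unfold alive at hx hy; unfold ovl; omega

lemma pp_le_of_alive {x y : Edge} {s : ℕ} (hx : alive x s) (hy : alive y s) :
    pp x y ≤ s ∧ s + 1 ≤ qq x y := by
  unfold alive at hx hy; unfold pp qq; omega

/-- co-alive distinct edges have distinct columns -/
lemma ec_ne (G : Good H b E S N) {x y : Edge} (hxE : x ∈ E) (hyE : y ∈ E)
    (hne : x ≠ y) {s : ℕ} (hx : alive x s) (hy : alive y s) : ec x ≠ ec y :=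
  fun h => G.samecol x hxE y hyE hne h (ovl_of_alive hx hy)

/-- ties between distinct columns are unique -/
lemma tie_unique (G : Good H b E S N) {x y : Edge} (hxE : x ∈ E) (hyE : y ∈ E)
    (hc : ec x ≠ ec y) {i i' : ℕ} (hii : i < i') (hN : i' ≤ N)
    (h1 : hv H x i = hv H y i) (h2 : hv H x i' = hv H y i') : False := by
  rcases G.mono x hxE y hyE hc with hm | hm
  · exact absurd h2 (ne_of_lt (hm i i' hii hN h1.le))
  · exact absurd h2.symm (ne_of_lt (hm i i' hii hN h1.symm.le))

/-- the value of an edge at a row strictly inside another edge's span equals b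
only if ... : distinctness at overlap left endpoint -/
lemma ne_at_pp (G : Pre H b E S N) {x y : Edge} (hxE : x ∈ E) (hyE : y ∈ E)
    (ho : ovl x y) (hel : el x ≠ el y) : hv H x (pp x y) ≠ hv H y (pp x y) := by
  unfold ovl at ho
  rcases lt_or_gt_of_ne hel with h | h
  · -- el x < el y, pp = el y, y's value is b, x interior
    have hpp : pp x y = el y := by unfold pp; omega
    rw [hpp]
    have hyb : hv H y (el y) = b := G.vl y hyE
    have hxb : hv H x (el y) ≠ b := G.vint x hxE (el y) h (by simp only [sup_lt_iff, lt_inf_iff] at ho; omega)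
    rw [hyb]; exact hxb
  · have hpp : pp x y = el x := by unfold pp; omega
    rw [hpp]
    have hxb : hv H x (el x) = b := G.vl x hxE
    have hyb : hv H y (el x) ≠ b := G.vint y hyE (el x) h (by simp only [sup_lt_iff, lt_inf_iff] at ho; omega)
    rw [hxb]; exact fun hh => hyb hh.symm

lemma ne_at_qq (G : Pre H b E S N) {x y : Edge} (hxE : x ∈ E) (hyE : y ∈ E)
    (ho : ovl x y) (her : er x ≠ er y) : hv H x (qq x y) ≠ hv H y (qq x y) := by
  unfold ovl at ho
  rcases lt_or_gt_of_ne her with h | h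
  · have hqq : qq x y = er x := by unfold qq; omega
    rw [hqq]
    have hxb : hv H x (er x) = b := G.vr x hxE
    have hyb : hv H y (er x) ≠ b := G.vint y hyE (er x) (by simp only [sup_lt_iff, lt_inf_iff] at ho; omega) h
    rw [hxb]; exact fun hh => hyb hh.symm
  · have hqq : qq x y = er y := by unfold qq; omega
    rw [hqq]
    have hyb : hv H y (er y) = b := G.vr y hyE
    have hxb : hv H x (er y) ≠ b := G.vint x hxE (er y) (by simp only [sup_lt_iff, lt_inf_iff] at ho; omega) h
    rw [hyb]; exact hxb

/-- indep holds for overlapping pairs with distinct el's and er's -/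
lemma indep_of (G : Good H b E S N) {x y : Edge} (hxE : x ∈ E) (hyE : y ∈ E)
    (ho : ovl x y) (hel : el x ≠ el y) (her : er x ≠ er y) : indep x y := by
  have h1 := G.lr x hxE; have h2 := G.lr y hyE
  unfold ovl at ho; exact ⟨hel, by omega, by omega, her⟩

/-- MASTER LEMMA (M'): if x is lex-below y in some common slab s, then x is
weakly below y at every row of the overlap. -/
lemma weak_below (G : Good H b E S N) {x y : Edge} (hxE : x ∈ E) (hyE : y ∈ E)
    (hne : x ≠ y) {s : ℕ} (hx : alive x s) (hy : alive y s)
    (hlt : lexlt H x y s) :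
    ∀ i, pp x y ≤ i → i ≤ qq x y → hv H x i ≤ hv H y i := by
  intro i hip hiq
  have hc := G.ec_ne hxE hyE hne hx hy
  have ho : ovl x y := ovl_of_alive hx hy
  have hps := pp_le_of_alive hx hy
  have hqN : qq x y ≤ N := le_trans (min_le_left _ _) (G.erN x hxE)
  obtain ⟨i₀, hi₀p, hi₀q, hst⟩ :
      ∃ i₀, pp x y ≤ i₀ ∧ i₀ ≤ qq x y ∧ hv H x i₀ < hv H y i₀ := by
    rcases hlt with h | ⟨h1, h2⟩
    · exact ⟨s, hps.1, by omega, h⟩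
    · exact ⟨s+1, by omega, hps.2, h2⟩
  rcases G.mono x hxE y hyE hc with hm | hm
  · -- orientation SM x y
    by_cases helq : el x = el y
    · -- A1 : shared left endpoint
      have hpx : pp x y = el x := by rw [pp, helq, max_self]
      have hxp : hv H x (pp x y) = b := by rw [hpx]; exact G.vl x hxE
      have hyp : hv H y (pp x y) = b := by rw [hpx, helq]; exact G.vl y hyE
      rcases Nat.eq_or_lt_of_le hip with he | hgt
      · rw [← he, hxp, hyp]
      · exact le_of_lt (hm (pp x y) i hgt (le_trans hiq hqN)
          (le_of_eq (hxp.trans hyp.symm)))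
    · by_cases herq : er x = er y
      · -- A2 : shared right endpoint, impossible with this orientation
        exfalso
        have hqx : qq x y = er x := by rw [qq, herq, min_self]
        have hxq : hv H x (qq x y) = b := by rw [hqx]; exact G.vr x hxE
        have hyq : hv H y (qq x y) = b := by rw [hqx, herq]; exact G.vr y hyE
        rcases Nat.eq_or_lt_of_le hi₀q with he | hlt2
        · rw [he, hxq, hyq] at hst; exact lt_irrefl _ hst
        · have := hm i₀ (qq x y) hlt2 hqN (le_of_lt hst)
          rw [hxq, hyq] at this; exact lt_irrefl _ this
      · -- A3 : independent, use nocross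
        have hind := G.indep_of hxE hyE ho helq herq
        have hiff := G.nocross x hxE y hyE hc hind ho
        have hq : hv H x (qq x y) < hv H y (qq x y) := by
          rcases Nat.eq_or_lt_of_le hi₀q with he | hlt2
          · rwa [he] at hst
          · exact hm i₀ (qq x y) hlt2 hqN (le_of_lt hst)
        have hp : hv H x (pp x y) < hv H y (pp x y) := hiff.mpr hq
        rcases Nat.eq_or_lt_of_le hip with he | hgt
        · rw [← he]; exact le_of_lt hp
        · exact le_of_lt (hm (pp x y) i hgt (le_trans hiq hqN) (le_of_lt hp))
  · -- orientation SM y x ; downward transfer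
    have CB : ∀ j j', j < j' → j' ≤ N → hv H x j' ≤ hv H y j' → hv H x j < hv H y j := by
      intro j j' hjj hjN hle
      by_contra hcon
      push_neg at hcon
      exact absurd hle (not_le_of_gt (hm j j' hjj hjN hcon))
    by_cases herq : er x = er y
    · -- B1 : shared right endpoint
      have hqx : qq x y = er x := by rw [qq, herq, min_self]
      have hxq : hv H x (qq x y) = b := by rw [hqx]; exact G.vr x hxE
      have hyq : hv H y (qq x y) = b := by rw [hqx, herq]; exact G.vr y hyE
      rcases Nat.eq_or_lt_of_le hiq with he | hlt2
      · rw [he, hxq, hyq]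
      · exact le_of_lt (CB i (qq x y) hlt2 hqN (le_of_eq (hxq.trans hyq.symm)))
    · by_cases helq : el x = el y
      · -- B2 : shared left endpoint, impossible with this orientation
        exfalso
        have hpx : pp x y = el x := by rw [pp, helq, max_self]
        have hxp : hv H x (pp x y) = b := by rw [hpx]; exact G.vl x hxE
        have hyp : hv H y (pp x y) = b := by rw [hpx, helq]; exact G.vl y hyE
        rcases Nat.eq_or_lt_of_le hi₀p with he | hlt2
        · rw [← he, hxp, hyp] at hst; exact lt_irrefl _ hst
        · have := hm (pp x y) i₀ hlt2 (le_trans hi₀q hqN)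
            (le_of_eq (hyp.trans hxp.symm))
          exact lt_asymm this hst
      · -- B3 : independent, use nocross
        have hind := G.indep_of hxE hyE ho helq herq
        have hiff := G.nocross x hxE y hyE hc hind ho
        have hp : hv H x (pp x y) < hv H y (pp x y) := by
          rcases Nat.eq_or_lt_of_le hi₀p with he | hlt2
          · rwa [← he] at hst
          · exact CB (pp x y) i₀ hlt2 (le_trans hi₀q hqN) (le_of_lt hst)
        have hq := hiff.mp hp
        rcases Nat.eq_or_lt_of_le hiq with he | hlt2
        · rw [he]; exact le_of_lt hq
        · exact le_of_lt (CB i (qq x y) hlt2 hqN (le_of_lt hq))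

/-- rigidity: lex-order of a co-alive pair is the same in all common slabs -/
lemma rigid (G : Good H b E S N) {x y : Edge} (hxE : x ∈ E) (hyE : y ∈ E)
    (hne : x ≠ y) {s s' : ℕ} (hx : alive x s) (hy : alive y s)
    (hx' : alive x s') (hy' : alive y s') (hlt : lexlt H x y s) :
    lexlt H x y s' := by
  have hc := G.ec_ne hxE hyE hne hx hy
  have h1 : hv H x s' ≤ hv H y s' :=
    G.weak_below hxE hyE hne hx hy hlt s' (pp_le_of_alive hx' hy').1
      (by have := (pp_le_of_alive hx' hy').2; omega)
  have h2 : hv H x (s'+1) ≤ hv H y (s'+1) :=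
    G.weak_below hxE hyE hne hx hy hlt (s'+1)
      (by have := (pp_le_of_alive hx' hy').1; omega) (pp_le_of_alive hx' hy').2
  rcases lt_or_eq_of_le h1 with h | h
  · exact Or.inl h
  · refine Or.inr ⟨h, lt_of_le_of_ne h2 ?_⟩
    intro heq
    have hN : s' + 1 ≤ N := by
      have := G.erN x hxE; have := hx'.2; omega
    exact G.tie_unique hxE hyE hc (Nat.lt_succ_self s') hN h heq

/-- totality -/
lemma total (G : Good H b E S N) {x y : Edge} (hxE : x ∈ E) (hyE : y ∈ E)
    (hne : x ≠ y) {s : ℕ} (hx : alive x s) (hy : alive y s) :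
    lexlt H x y s ∨ lexlt H y x s := by
  have hc := G.ec_ne hxE hyE hne hx hy
  rcases lt_trichotomy (hv H x s) (hv H y s) with h | h | h
  · exact Or.inl (Or.inl h)
  · rcases lt_trichotomy (hv H x (s+1)) (hv H y (s+1)) with h2 | h2 | h2
    · exact Or.inl (Or.inr ⟨h, h2⟩)
    · exfalso
      have hN : s + 1 ≤ N := by have := G.erN x hxE; have := hx.2; omega
      exact G.tie_unique hxE hyE hc (Nat.lt_succ_self s) hN h h2
    · exact Or.inr (Or.inr ⟨h.symm, h2⟩)
  · exact Or.inr (Or.inl h)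

lemma lexlt_asymm {x y : Edge} {s : ℕ} (h : lexlt H x y s) : ¬ lexlt H y x s := by
  rcases h with h | ⟨h1, h2⟩ <;> rintro (h' | ⟨h1', h2'⟩) <;> linarith

lemma lexlt_irrefl {x : Edge} {s : ℕ} (h : lexlt H x x s) : False := by
  rcases h with h | ⟨h1, h2⟩ <;> linarith

lemma indep_symm {x y : Edge} (h : indep x y) : indep y x := by
  obtain ⟨h1, h2, h3, h4⟩ := h; exact ⟨h1.symm, h3.symm, h2.symm, h4.symm⟩

lemma ovl_symm {x y : Edge} (h : ovl x y) : ovl y x := by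
  unfold ovl at h ⊢; rw [max_comm, min_comm]; exact h

lemma pp_symm (x y : Edge) : pp y x = pp x y := max_comm _ _
lemma qq_symm (x y : Edge) : qq y x = qq x y := min_comm _ _

/-- values of a dying pair at row t-1 are distinct -/
lemma dying_ne (G : Good H b E S N) {x y : Edge} (hxE : x ∈ E) (hyE : y ∈ E)
    (hne : x ≠ y) (ht : er x = er y) :
    hv H x (er x - 1) ≠ hv H y (er x - 1) := by
  intro heq
  have hlx := G.lr x hxE; have hly := G.lr y hyE
  have hax : alive x (er x - 1) := ⟨by omega, by omega⟩
  have hay : alive y (er x - 1) := ⟨by omega, by omega⟩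
  have hc := G.ec_ne hxE hyE hne hax hay
  have hxq := G.vr x hxE; have hyq := G.vr y hyE
  refine G.tie_unique hxE hyE hc (show er x - 1 < er x by omega)
    (G.erN x hxE) heq ?_
  rw [hxq, ht, hyq]

/-- no passing edge lies between two edges dying at t -/
lemma dying_block (G : Good H b E S N) {x y z : Edge} (hxE : x ∈ E) (hyE : y ∈ E)
    (hzE : z ∈ E) (ht : er x = er y)
    (hz : alive z (er x - 1)) (hzt : er z ≠ er x)
    (h1 : lexlt H x z (er x - 1)) (h2 : lexlt H z y (er x - 1)) : False := by
  have hlx := G.lr x hxE; have hly := G.lr y hyE; have hlz := G.lr z hzE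
  have hax : alive x (er x - 1) := ⟨by omega, by omega⟩
  have hay : alive y (er x - 1) := ⟨by omega, by omega⟩
  have hzx : z ≠ x := by rintro rfl; exact lexlt_irrefl h1
  have hzy : z ≠ y := by rintro rfl; exact lexlt_irrefl h2
  have hz2 : er x < er z := by
    rcases hz with ⟨hz1, hz2⟩; omega
  -- weak_below x z at row (er x)
  have w1 : hv H x (er x) ≤ hv H z (er x) := by
    refine G.weak_below hxE hzE (Ne.symm hzx) hax hz h1 (er x) ?_ ?_
    · unfold pp; rcases hz with ⟨u, v⟩; rcases hax with ⟨u2, v2⟩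
      simp only [sup_le_iff]; omega
    · unfold qq; simp only [le_inf_iff]; omega
  have w2 : hv H z (er x) ≤ hv H y (er x) := by
    refine G.weak_below hzE hyE hzy hz hay h2 (er x) ?_ ?_
    · unfold pp; rcases hz with ⟨u, v⟩; simp only [sup_le_iff]; omega
    · unfold qq; simp only [le_inf_iff]; omega
  have hxb := G.vr x hxE
  have hyb : hv H y (er x) = b := by rw [ht]; exact G.vr y hyE
  have hzb : hv H z (er x) ≠ b := G.vint z hzE (er x) (by rcases hz with ⟨u,v⟩; omega) hz2
  rw [hxb] at w1; rw [hyb] at w2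
  exact hzb (le_antisymm w2 w1)

/-- structure at a type-A event : new edge y born on top of old edge x -/
lemma typeA_min (G : Good H b E S N) {x y : Edge} (hxE : x ∈ E) (hyE : y ∈ E)
    (hlt : el x < el y) (hadj : adjS H E x y (el y)) :
    (∀ w ∈ E, el w = el y → w ≠ y → lexlt H y w (el y)) ∧
    (∀ z ∈ E, alive z (el y) → lexlt H z y (el y) → z ≠ x → lexlt H z x (el y)) := by
  obtain ⟨hax, hay, hxy, hnob⟩ := hadj
  have hxlow : hv H x (el y) < b := by
    have hyv := G.vl y hyE
    rcases hxy with h | ⟨h1, h2⟩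
    · rwa [hyv] at h
    · exfalso
      exact G.vint x hxE (el y) hlt (by rcases hax with ⟨u,v⟩; omega) (by rw [h1, hyv])
  constructor
  · intro w hwE hwl hwy
    have hwv : hv H w (el y) = b := by rw [show el y = el w from hwl.symm]; exact G.vl w hwE
    have haw : alive w (el y) := ⟨hwl.le, by have := G.lr w hwE; omega⟩
    have hxw : lexlt H x w (el y) := Or.inl (by rw [hwv]; exact hxlow)
    have : ¬ lexlt H w y (el y) := fun hws => hnob w hwE haw ⟨hxw, hws⟩
    rcases G.total hwE hyE hwy haw hay with h | h
    · exact absurd h this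
    · exact h
  · intro z hzE haz hzy hzx
    rcases G.total hzE hxE hzx haz hax with h | h
    · exact h
    · exact absurd ⟨h, hzy⟩ (hnob z hzE haz)

/-- structure at a type-B event : new edge x born below old edge y -/
lemma typeB_min (G : Good H b E S N) {x y : Edge} (hxE : x ∈ E) (hyE : y ∈ E)
    (hlt : el y < el x) (hadj : adjS H E x y (el x)) :
    (∀ w ∈ E, el w = el x → w ≠ x → lexlt H w x (el x)) ∧
    (∀ z ∈ E, alive z (el x) → lexlt H x z (el x) → z ≠ y → lexlt H y z (el x)) := by
  obtain ⟨hax, hay, hxy, hnob⟩ := hadj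
  have hyhigh : b < hv H y (el x) := by
    have hxv := G.vl x hxE
    rcases hxy with h | ⟨h1, h2⟩
    · rwa [hxv] at h
    · exfalso
      exact G.vint y hyE (el x) hlt (by rcases hay with ⟨u,v⟩; omega) (by rw [← h1, hxv])
  constructor
  · intro w hwE hwl hwx
    have hwv : hv H w (el x) = b := by rw [show el x = el w from hwl.symm]; exact G.vl w hwE
    have haw : alive w (el x) := ⟨hwl.le, by have := G.lr w hwE; omega⟩
    have hwy : lexlt H w y (el x) := Or.inl (by rw [hwv]; exact hyhigh)
    have : ¬ lexlt H x w (el x) := fun hws => hnob w hwE haw ⟨hws, hwy⟩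
    rcases G.total hwE hxE hwx haw hax with h | h
    · exact h
    · exact absurd h this
  · intro z hzE haz hxz hzy
    rcases G.total hyE hzE (Ne.symm hzy) hay haz with h | h
    · exact h
    · exact absurd ⟨hxz, h⟩ (hnob z hzE haz)

/-- structure at a type-C (gap-closing) event -/
lemma typeC (G : Good H b E S N) {x y : Edge} (hxE : x ∈ E) (hyE : y ∈ E)
    (hne : x ≠ y) (ht : er x = er y) {s : ℕ}
    (hβ : max (el x) (el y) < s) (hs : s ≤ er x - 1)
    (hadj : adjS H E x y s) (hnadj : ¬ adjS H E x y (s - 1)) :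
    (∃ z ∈ E, er z = s) ∧ hv H x s < b ∧ b < hv H y s ∧
    (∀ w ∈ E, alive w s → hv H w s < b → w ≠ x → lexlt H w x s) ∧
    (∀ w ∈ E, alive w s → b < hv H w s → w ≠ y → lexlt H y w s) := by
  have hlx := G.lr x hxE; have hly := G.lr y hyE
  have hs1 : 1 ≤ s := by omega
  have hax' : alive x (s-1) := ⟨by simp only [sup_lt_iff] at hβ; omega, by omega⟩
  have hay' : alive y (s-1) := ⟨by simp only [sup_lt_iff] at hβ; omega, by omega⟩
  obtain ⟨hax, hay, hxy, hnob⟩ := hadj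
  have hxy' : lexlt H x y (s-1) := G.rigid hxE hyE hne hax hay hax' hay' hxy
  obtain ⟨z, hzE, haz, h1, h2⟩ :
      ∃ z ∈ E, alive z (s-1) ∧ lexlt H x z (s-1) ∧ lexlt H z y (s-1) := by
    by_contra hcon
    push_neg at hcon
    exact hnadj ⟨hax', hay', hxy', fun z hz haz hb => hcon z hz haz hb.1 hb.2⟩
  have hzx : z ≠ x := by rintro rfl; exact lexlt_irrefl h1
  have hzy : z ≠ y := by rintro rfl; exact lexlt_irrefl h2
  have herz : er z = s := by
    by_contra hcon
    have haz2 : alive z s := ⟨by rcases haz with ⟨u,v⟩; omega, by rcases haz with ⟨u,v⟩; omega⟩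
    have hb1 : lexlt H x z s := G.rigid hxE hzE (Ne.symm hzx) hax' haz hax haz2 h1
    have hb2 : lexlt H z y s := G.rigid hzE hyE hzy haz hay' haz2 hay h2
    exact hnob z hzE haz2 ⟨hb1, hb2⟩
  have hvz : hv H z s = b := by rw [← herz]; exact G.vr z hzE
  have hxs : hv H x s ≠ b := G.vint x hxE s (by simp only [sup_lt_iff] at hβ; omega) (by omega)
  have hys : hv H y s ≠ b := G.vint y hyE s (by simp only [sup_lt_iff] at hβ; omega) (by omega)
  have wx : hv H x s ≤ hv H z s := by
    refine G.weak_below hxE hzE (Ne.symm hzx) hax' haz h1 s ?_ ?_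
    · unfold pp; rcases haz with ⟨u,v⟩; rcases hax' with ⟨u2,v2⟩
      simp only [sup_le_iff]; omega
    · unfold qq; simp only [le_inf_iff]; omega
  have wy : hv H z s ≤ hv H y s := by
    refine G.weak_below hzE hyE hzy haz hay' h2 s ?_ ?_
    · unfold pp; rcases haz with ⟨u,v⟩; rcases hay' with ⟨u2,v2⟩
      simp only [sup_le_iff]; omega
    · unfold qq; simp only [le_inf_iff]; omega
  rw [hvz] at wx wy
  have hxlow : hv H x s < b := lt_of_le_of_ne wx hxs
  have hyhigh : b < hv H y s := lt_of_le_of_ne wy (Ne.symm hys)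
  refine ⟨⟨z, hzE, herz⟩, hxlow, hyhigh, ?_, ?_⟩
  · intro w hwE haw hwv hwx
    have hwy : lexlt H w y s := Or.inl (lt_trans hwv hyhigh)
    rcases G.total hwE hxE hwx haw hax with h | h
    · exact h
    · exact absurd ⟨h, hwy⟩ (hnob w hwE haw)
  · intro w hwE haw hwv hwy
    have hxw : lexlt H x w s := Or.inl (lt_trans hxlow hwv)
    rcases G.total hyE hwE (Ne.symm hwy) hay haw with h | h
    · exact h
    · exact absurd ⟨hxw, h⟩ (hnob w hwE haw)

end Good

open scoped Classical in
noncomputable def dyingAdj (E : Finset Edge) : Finset (Edge × Edge) :=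
  (E ×ˢ E).filter fun q => er q.1 = er q.2 ∧ q.1 ≠ q.2 ∧ adjS H E q.1 q.2 (er q.1 - 1)

open scoped Classical in
noncomputable def sstar (E : Finset Edge) (x y : Edge) : ℕ :=
  if h : ∃ s, ∀ s', s ≤ s' → s' ≤ er x - 1 → adjS H E x y s' then Nat.find h else 0

namespace Good

variable {H} {b} {E : Finset Edge} {S : Finset ℕ} {N : ℕ}

lemma mem_dyingAdj {q : Edge × Edge} :
    q ∈ dyingAdj H E ↔ q.1 ∈ E ∧ q.2 ∈ E ∧ er q.1 = er q.2 ∧ q.1 ≠ q.2 ∧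
      adjS H E q.1 q.2 (er q.1 - 1) := by
  classical
  unfold dyingAdj
  simp only [Finset.mem_filter, Finset.mem_product, and_assoc]

lemma sstar_facts (G : Good H b E S N) {x y : Edge} (hxE : x ∈ E) (hyE : y ∈ E)
    (ht : er x = er y) (hne : x ≠ y) (hadj : adjS H E x y (er x - 1)) :
    (∀ s', sstar H E x y ≤ s' → s' ≤ er x - 1 → adjS H E x y s') ∧
    max (el x) (el y) ≤ sstar H E x y ∧ sstar H E x y ≤ er x - 1 ∧
    (sstar H E x y ≠ max (el x) (el y) → ¬ adjS H E x y (sstar H E x y - 1)) := by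
  classical
  have hQ : ∀ s', er x - 1 ≤ s' → s' ≤ er x - 1 → adjS H E x y s' := by
    intro s' h1 h2
    have hss : s' = er x - 1 := le_antisymm h2 h1
    rwa [hss]
  have hex : ∃ s, ∀ s', s ≤ s' → s' ≤ er x - 1 → adjS H E x y s' := ⟨er x - 1, hQ⟩
  have hdef : sstar H E x y = Nat.find hex := by
    unfold sstar; rw [dif_pos hex]
  rw [hdef]
  have hspec := Nat.find_spec hex
  have hle : Nat.find hex ≤ er x - 1 := Nat.find_le hQ
  have hβ : max (el x) (el y) ≤ Nat.find hex := by
    obtain ⟨hax, hay, -, -⟩ := hspec (Nat.find hex) le_rfl hle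
    simp only [sup_le_iff]
    exact ⟨hax.1, hay.1⟩
  refine ⟨hspec, hβ, hle, ?_⟩
  intro hneq hadj'
  have hpos : 1 ≤ Nat.find hex := by
    rcases Nat.eq_zero_or_pos (Nat.find hex) with h0 | h
    · exfalso; apply hneq; rw [h0]; omega
    · exact h
  have hmin := Nat.find_min hex (show Nat.find hex - 1 < Nat.find hex by omega)
  apply hmin
  intro s' h1 h2
  rcases Nat.eq_or_lt_of_le h1 with he | hgt
  · rwa [← he]
  · exact hspec s' (by omega) h2

lemma fiber_card (G : Good H b E S N) (t : ℕ) :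
    (E.filter fun x => er x = t).card ≤
      ((dyingAdj H E).filter fun q => er q.1 = t).card + 1 := by
  classical
  set D := E.filter fun x => er x = t with hD
  by_cases hDe : D.Nonempty
  swap
  · have : D.card = 0 := by rw [Finset.card_eq_zero]; exact Finset.not_nonempty_iff_eq_empty.mp hDe
    omega
  obtain ⟨xm, hxm, hxmax⟩ := Finset.exists_max_image D (fun z => hv H z (t-1)) hDe
  have hkey : ∀ z ∈ D, ∀ w ∈ D, z ≠ w → hv H z (t-1) ≠ hv H w (t-1) := by
    intro z hz w hw hzw
    have hz' := Finset.mem_filter.mp hz; have hw' := Finset.mem_filter.mp hw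
    have := G.dying_ne hz'.1 hw'.1 hzw (hz'.2.trans hw'.2.symm)
    rwa [hz'.2] at this
  have hnxt : ∀ z ∈ D.erase xm, ∃ w, (w ∈ D ∧ hv H z (t-1) < hv H w (t-1)) ∧
      ∀ u ∈ D, hv H z (t-1) < hv H u (t-1) → hv H w (t-1) ≤ hv H u (t-1) := by
    intro z hz
    have hzD := Finset.mem_of_mem_erase hz
    have hzne := Finset.ne_of_mem_erase hz
    have hAne : (D.filter fun w => hv H z (t-1) < hv H w (t-1)).Nonempty := by
      refine ⟨xm, Finset.mem_filter.mpr ⟨hxm, ?_⟩⟩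
      exact lt_of_le_of_ne (hxmax z hzD) (hkey z hzD xm hxm hzne)
    obtain ⟨w, hw, hwmin⟩ := Finset.exists_min_image _ (fun u => hv H u (t-1)) hAne
    have hw' := Finset.mem_filter.mp hw
    exact ⟨w, ⟨hw'.1, hw'.2⟩, fun u hu huv => hwmin u (Finset.mem_filter.mpr ⟨hu, huv⟩)⟩
  choose nxt hnxtD hnxtmin using hnxt
  have hcard : (D.erase xm).card ≤ ((dyingAdj H E).filter fun q => er q.1 = t).card := by
    apply Finset.card_le_card_of_injOn
      (fun z => if h : z ∈ D.erase xm then (z, nxt z h) else (z, z))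
    · intro z hz
      simp only [Finset.mem_coe] at hz ⊢
      rw [dif_pos hz]
      have hzD := Finset.mem_of_mem_erase hz
      have hz' := Finset.mem_filter.mp hzD
      have hwD := (hnxtD z hz).1
      have hw' := Finset.mem_filter.mp hwD
      have hkeylt := (hnxtD z hz).2
      have hlz := G.lr z hz'.1
      have hlw := G.lr (nxt z hz) hw'.1
      have htpos : 1 ≤ t := by omega
      refine Finset.mem_filter.mpr ⟨mem_dyingAdj.mpr ⟨hz'.1, hw'.1, ?_, ?_, ?_⟩, hz'.2⟩
      · show er z = er (nxt z hz)
        rw [hz'.2, hw'.2]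
      · intro heqq
        have hzw : z = nxt z hz := heqq
        rw [← hzw] at hkeylt
        exact lt_irrefl _ hkeylt
      · show adjS H E z (nxt z hz) (er z - 1)
        rw [show er z = t from hz'.2]
        refine ⟨⟨by omega, by omega⟩, ⟨by omega, by omega⟩, Or.inl hkeylt, ?_⟩
        intro u huE hau hbet
        obtain ⟨hu1, hu2⟩ := hbet
        by_cases heru : er u = t
        · have huD : u ∈ D := Finset.mem_filter.mpr ⟨huE, heru⟩
          have hzu : z ≠ u := by rintro rfl; exact lexlt_irrefl hu1
          have huw : u ≠ nxt z hz := by rintro rfl; exact lexlt_irrefl hu2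
          have hk1 : hv H z (t-1) < hv H u (t-1) := by
            rcases hu1 with h | ⟨h1, h2⟩
            · exact h
            · exact absurd h1 (hkey z hzD u huD hzu)
          have hk2 := hnxtmin z hz u huD hk1
          rcases hu2 with h | ⟨h1, h2⟩
          · exact absurd h (not_lt_of_ge hk2)
          · exact absurd h1 (hkey u huD (nxt z hz) hwD huw)
        · refine G.dying_block hz'.1 hw'.1 huE ?_ ?_ ?_ ?_ ?_
          · show er z = er (nxt z hz); rw [hz'.2, hw'.2]
          · rw [hz'.2]; exact hau
          · rw [hz'.2]; exact heru
          · rw [hz'.2]; exact hu1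
          · rw [hz'.2]; exact hu2
    · intro a ha b hb hab
      simp only at hab
      rw [dif_pos (Finset.mem_coe.mp ha), dif_pos (Finset.mem_coe.mp hb)] at hab
      exact (Prod.ext_iff.mp hab).1
  have herase := Finset.card_erase_of_mem hxm
  omega

lemma card_le_S_add (G : Good H b E S N) :
    E.card ≤ S.card + (dyingAdj H E).card := by
  classical
  have h1 : E.card = ∑ t ∈ S, (E.filter fun x => er x = t).card :=
    Finset.card_eq_sum_card_fiberwise (fun x hx => (G.inS x hx).2)
  have h2 : (dyingAdj H E).card
      = ∑ t ∈ S, ((dyingAdj H E).filter fun q => er q.1 = t).card :=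
    Finset.card_eq_sum_card_fiberwise
      (fun q hq => (G.inS q.1 (mem_dyingAdj.mp hq).1).2)
  have h3 : ∑ t ∈ S, (E.filter fun x => er x = t).card
      ≤ ∑ t ∈ S, (((dyingAdj H E).filter fun q => er q.1 = t).card + 1) :=
    Finset.sum_le_sum fun t _ => G.fiber_card t
  rw [Finset.sum_add_distrib, Finset.sum_const, smul_eq_mul, mul_one, ← h2] at h3
  omega

lemma dyingAdj_card_le (G : Good H b E S N) : (dyingAdj H E).card ≤ 3 * S.card := by
  classical
  have hmain : (dyingAdj H E).card ≤ (S ×ˢ (Finset.univ : Finset (Fin 3))).card := by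
    apply Finset.card_le_card_of_injOn
      (fun q => (sstar H E q.1 q.2,
        if sstar H E q.1 q.2 = max (el q.1) (el q.2) then
          (if el q.1 < el q.2 then (0 : Fin 3) else 1) else 2))
    · intro q hq
      obtain ⟨h1E, h2E, ht, hne, hadj⟩ := mem_dyingAdj.mp hq
      obtain ⟨hQall, hβle, hsle, hmin⟩ := G.sstar_facts h1E h2E ht hne hadj
      simp only [Finset.mem_coe]
      rw [Finset.mem_product]
      refine ⟨?_, Finset.mem_univ _⟩
      by_cases hcase : sstar H E q.1 q.2 = max (el q.1) (el q.2)
      · by_cases hlt : el q.1 < el q.2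
        · rw [hcase, max_eq_right hlt.le]; exact (G.inS q.2 h2E).1
        · rw [hcase, max_eq_left (not_lt.mp hlt)]; exact (G.inS q.1 h1E).1
      · have hβ : max (el q.1) (el q.2) < sstar H E q.1 q.2 :=
          lt_of_le_of_ne hβle (Ne.symm hcase)
        have hadjs : adjS H E q.1 q.2 (sstar H E q.1 q.2) := hQall _ le_rfl hsle
        obtain ⟨⟨z, hzE, hzer⟩, -, -, -, -⟩ :=
          G.typeC h1E h2E hne ht hβ hsle hadjs (hmin hcase)
        rw [← hzer]; exact (G.inS z hzE).2
    · intro q hq q' hq' heq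
      obtain ⟨h1E, h2E, ht, hne, hadj⟩ := mem_dyingAdj.mp (Finset.mem_coe.mp hq)
      obtain ⟨h1E', h2E', ht', hne', hadj'⟩ := mem_dyingAdj.mp (Finset.mem_coe.mp hq')
      obtain ⟨hQall, hβle, hsle, hmin⟩ := G.sstar_facts h1E h2E ht hne hadj
      obtain ⟨hQall', hβle', hsle', hmin'⟩ := G.sstar_facts h1E' h2E' ht' hne' hadj'
      simp only at heq
      rw [Prod.mk.injEq] at heq
      obtain ⟨hseq, htyeq⟩ := heq
      by_cases hcase : sstar H E q.1 q.2 = max (el q.1) (el q.2) <;>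
        by_cases hcase' : sstar H E q'.1 q'.2 = max (el q'.1) (el q'.2)
      · -- both boundary events
        rw [if_pos hcase, if_pos hcase'] at htyeq
        by_cases hlt : el q.1 < el q.2 <;> by_cases hlt' : el q'.1 < el q'.2
        · -- both type A
          have hs2 : sstar H E q.1 q.2 = el q.2 := by rw [hcase, max_eq_right hlt.le]
          have hs2' : sstar H E q'.1 q'.2 = el q'.2 := by rw [hcase', max_eq_right hlt'.le]
          have hel22 : el q.2 = el q'.2 := by rw [← hs2, ← hs2', hseq]
          have hadjP : adjS H E q.1 q.2 (el q.2) := by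
            rw [← hs2]; exact hQall _ le_rfl hsle
          have hadjP' : adjS H E q'.1 q'.2 (el q'.2) := by
            rw [← hs2']; exact hQall' _ le_rfl hsle'
          have A := G.typeA_min h1E h2E hlt hadjP
          have A' := G.typeA_min h1E' h2E' hlt' hadjP'
          have hy : q.2 = q'.2 := by
            by_contra hyne
            have l1 := A.1 q'.2 h2E' hel22.symm (Ne.symm hyne)
            have l2 := A'.1 q.2 h2E hel22 hyne
            rw [show el q'.2 = el q.2 from hel22.symm] at l2
            exact lexlt_asymm l1 l2
          have hx : q.1 = q'.1 := by
            by_contra hxne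
            have ha1 : alive q'.1 (el q.2) := by rw [hel22]; exact hadjP'.1
            have hl1 : lexlt H q'.1 q.2 (el q.2) := by
              rw [hy]; exact hadjP'.2.2.1
            have l1 := A.2 q'.1 h1E' ha1 hl1 (Ne.symm hxne)
            have ha2 : alive q.1 (el q'.2) := by
              rw [show el q'.2 = el q.2 from hel22.symm]; exact hadjP.1
            have hl2 : lexlt H q.1 q'.2 (el q'.2) := by
              rw [← hy]; exact hadjP.2.2.1
            have l2 := A'.2 q.1 h1E ha2 hl2 hxne
            rw [show el q'.2 = el q.2 from hel22.symm] at l2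
            exact lexlt_asymm l1 l2
          exact Prod.ext hx hy
        · rw [if_pos hlt, if_neg hlt'] at htyeq; exact absurd htyeq (by decide)
        · rw [if_neg hlt, if_pos hlt'] at htyeq; exact absurd htyeq (by decide)
        · -- both type B
          have hltB : el q.2 < el q.1 := by
            rcases lt_or_eq_of_le (not_lt.mp hlt) with h | h
            · exact h
            · exact absurd (G.esimp _ h1E _ h2E h.symm ht) hne
          have hltB' : el q'.2 < el q'.1 := by
            rcases lt_or_eq_of_le (not_lt.mp hlt') with h | h
            · exact h
            · exact absurd (G.esimp _ h1E' _ h2E' h.symm ht') hne'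
          have hs2 : sstar H E q.1 q.2 = el q.1 := by rw [hcase, max_eq_left hltB.le]
          have hs2' : sstar H E q'.1 q'.2 = el q'.1 := by rw [hcase', max_eq_left hltB'.le]
          have hel11 : el q.1 = el q'.1 := by rw [← hs2, ← hs2', hseq]
          have hadjP : adjS H E q.1 q.2 (el q.1) := by
            rw [← hs2]; exact hQall _ le_rfl hsle
          have hadjP' : adjS H E q'.1 q'.2 (el q'.1) := by
            rw [← hs2']; exact hQall' _ le_rfl hsle'
          have B := G.typeB_min h1E h2E hltB hadjP
          have B' := G.typeB_min h1E' h2E' hltB' hadjP'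
          have hx : q.1 = q'.1 := by
            by_contra hxne
            have l1 := B.1 q'.1 h1E' hel11.symm (Ne.symm hxne)
            have l2 := B'.1 q.1 h1E hel11 hxne
            rw [show el q'.1 = el q.1 from hel11.symm] at l2
            exact lexlt_asymm l1 l2
          have hy : q.2 = q'.2 := by
            by_contra hyne
            have ha1 : alive q'.2 (el q.1) := by rw [hel11]; exact hadjP'.2.1
            have hl1 : lexlt H q.1 q'.2 (el q.1) := by
              rw [hx]; exact hadjP'.2.2.1
            have l1 := B.2 q'.2 h2E' ha1 hl1 (Ne.symm hyne)
            have ha2 : alive q.2 (el q'.1) := by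
              rw [show el q'.1 = el q.1 from hel11.symm]; exact hadjP.2.1
            have hl2 : lexlt H q'.1 q.2 (el q'.1) := by
              rw [← hx]; exact hadjP.2.2.1
            have l2 := B'.2 q.2 h2E ha2 hl2 hyne
            rw [show el q'.1 = el q.1 from hel11.symm] at l2
            exact lexlt_asymm l1 l2
          exact Prod.ext hx hy
      · rw [if_pos hcase, if_neg hcase'] at htyeq
        by_cases hlt : el q.1 < el q.2
        · rw [if_pos hlt] at htyeq; exact absurd htyeq (by decide)
        · rw [if_neg hlt] at htyeq; exact absurd htyeq (by decide)
      · rw [if_neg hcase, if_pos hcase'] at htyeq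
        by_cases hlt : el q'.1 < el q'.2
        · rw [if_pos hlt] at htyeq; exact absurd htyeq (by decide)
        · rw [if_neg hlt] at htyeq; exact absurd htyeq (by decide)
      · -- both gap-closing events
        have hβ : max (el q.1) (el q.2) < sstar H E q.1 q.2 :=
          lt_of_le_of_ne hβle (Ne.symm hcase)
        have hβ' : max (el q'.1) (el q'.2) < sstar H E q'.1 q'.2 :=
          lt_of_le_of_ne hβle' (Ne.symm hcase')
        have hadjs : adjS H E q.1 q.2 (sstar H E q.1 q.2) := hQall _ le_rfl hsle
        have hadjs' : adjS H E q'.1 q'.2 (sstar H E q'.1 q'.2) := hQall' _ le_rfl hsle'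
        obtain ⟨-, hxlow, hyhigh, hmax, hminy⟩ :=
          G.typeC h1E h2E hne ht hβ hsle hadjs (hmin hcase)
        obtain ⟨-, hxlow', hyhigh', hmax', hminy'⟩ :=
          G.typeC h1E' h2E' hne' ht' hβ' hsle' hadjs' (hmin' hcase')
        rw [← hseq] at hxlow' hyhigh' hmax' hminy' hadjs'
        have hx : q.1 = q'.1 := by
          by_contra hxne
          have l1 := hmax q'.1 h1E' hadjs'.1 hxlow' (Ne.symm hxne)
          have l2 := hmax' q.1 h1E hadjs.1 hxlow hxne
          exact lexlt_asymm l1 l2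
        have hy : q.2 = q'.2 := by
          by_contra hyne
          have l1 := hminy q'.2 h2E' hadjs'.2.1 hyhigh' (Ne.symm hyne)
          have l2 := hminy' q.2 h2E hadjs.2.1 hyhigh hyne
          exact lexlt_asymm l2 l1
        exact Prod.ext hx hy
  rw [Finset.card_product, Finset.card_univ, Fintype.card_fin] at hmain
  omega

/-- THE BASE LEMMA: a crossing-free good edge system has at most 4|S| edges. -/
theorem base (G : Good H b E S N) : E.card ≤ 4 * S.card := by
  have h1 := G.card_le_S_add
  have h2 := G.dyingAdj_card_le
  omega

end Good

/-- a combinatorial crossing between two edges -/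
def cross (x y : Edge) : Prop :=
  ec x < ec y ∧ indep x y ∧ ovl x y ∧
    ¬(hv H x (pp x y) < hv H y (pp x y) ↔ hv H x (qq x y) < hv H y (qq x y))

open scoped Classical in
noncomputable def crossSet (E : Finset Edge) : Finset (Edge × Edge) :=
  (E ×ˢ E).filter fun q => cross H q.1 q.2

namespace Pre

variable {H} {b} {E : Finset Edge} {S : Finset ℕ} {N : ℕ}

lemma mem_crossSet {q : Edge × Edge} :
    q ∈ crossSet H E ↔ q.1 ∈ E ∧ q.2 ∈ E ∧ cross H q.1 q.2 := by
  classical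
  unfold crossSet
  simp only [Finset.mem_filter, Finset.mem_product, and_assoc]

lemma subset (P : Pre H b E S N) {F : Finset Edge} (hF : F ⊆ E) : Pre H b F S N :=
  ⟨fun x hx => P.lr x (hF hx), fun x hx => P.erN x (hF hx), fun x hx => P.inS x (hF hx),
   fun x hx => P.vl x (hF hx), fun x hx => P.vr x (hF hx), fun x hx => P.vint x (hF hx),
   fun x hx y hy => P.esimp x (hF hx) y (hF hy),
   fun x hx y hy => P.mono x (hF hx) y (hF hy),
   fun x hx y hy => P.samecol x (hF hx) y (hF hy)⟩

lemma toGood (P : Pre H b E S N)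
    (hfree : ∀ x ∈ E, ∀ y ∈ E, ¬ cross H x y) : Good H b E S N := by
  refine ⟨P.lr, P.erN, P.inS, P.vl, P.vr, P.vint, P.esimp, P.mono, P.samecol, ?_⟩
  intro x hxE y hyE hc hind ho
  rcases lt_or_gt_of_ne hc with hcx | hcy
  · by_contra hniff
    exact hfree x hxE y hyE ⟨hcx, hind, ho, hniff⟩
  · have hane : hv H x (pp x y) ≠ hv H y (pp x y) :=
      Good.ne_at_pp P hxE hyE ho hind.1
    have hbne : hv H x (qq x y) ≠ hv H y (qq x y) :=
      Good.ne_at_qq P hxE hyE ho hind.2.2.2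
    by_contra hniff
    refine hfree y hyE x hxE ⟨hcy, Good.indep_symm hind, Good.ovl_symm ho, ?_⟩
    rw [Good.pp_symm, Good.qq_symm]
    intro hiff
    apply hniff
    constructor
    · intro ha
      rcases lt_or_gt_of_ne hbne with h | h
      · exact h
      · exact absurd (hiff.mpr h) (by linarith)
    · intro hb
      rcases lt_or_gt_of_ne hane with h | h
      · exact h
      · exact absurd (hiff.mp h) (by linarith)

/-- Pruning: edge count is at most 4|S| plus the number of crossings. -/
theorem prune (P : Pre H b E S N) :
    E.card ≤ 4 * S.card + (crossSet H E).card := by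
  classical
  suffices h : ∀ n (E' : Finset Edge), E'.card = n → Pre H b E' S N →
      E'.card ≤ 4 * S.card + (crossSet H E').card from h _ E rfl P
  intro n
  induction n using Nat.strong_induction_on with
  | _ n ih =>
    intro E hcard P
    by_cases hcr : (crossSet H E).Nonempty
    · obtain ⟨c, hc⟩ := hcr
      have hcm := mem_crossSet.mp hc
      set E' := E.erase c.1 with hE'
      have hsub : E' ⊆ E := Finset.erase_subset _ _
      have hcard' : E'.card = n - 1 := by
        rw [hE', Finset.card_erase_of_mem hcm.1, hcard]
      have hnpos : 0 < n := by
        rw [← hcard]; exact Finset.card_pos.mpr ⟨c.1, hcm.1⟩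
      have hrec := ih (n-1) (by omega) E' hcard' (P.subset hsub)
      have hcs : crossSet H E' ⊆ (crossSet H E).erase c := by
        intro d hd
        obtain ⟨hd1, hd2, hdc⟩ := mem_crossSet.mp hd
        refine Finset.mem_erase.mpr
          ⟨?_, mem_crossSet.mpr ⟨hsub hd1, hsub hd2, hdc⟩⟩
        intro hde
        rw [hde] at hd1
        exact (Finset.notMem_erase _ _) hd1
      have hcs2 := Finset.card_le_card hcs
      rw [Finset.card_erase_of_mem hc] at hcs2
      have hcpos : 1 ≤ (crossSet H E).card := Finset.card_pos.mpr ⟨c, hc⟩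
      omega
    · have hnone : ∀ x ∈ E, ∀ y ∈ E, ¬ cross H x y := by
        intro x hx y hy hcross
        exact hcr ⟨(x,y), mem_crossSet.mpr ⟨hx, hy, hcross⟩⟩
      have hbase := (P.toGood hnone).base
      omega

/-- number of k-subsets of U containing a fixed subset T -/
lemma count_supersets {U T : Finset ℕ} {k : ℕ} (hT : T ⊆ U) (hk : T.card ≤ k) :
    ((Finset.powersetCard k U).filter fun W => T ⊆ W).card
      = Nat.choose (U.card - T.card) (k - T.card) := by
  classical
  have hUT : (U \ T).card = U.card - T.card := Finset.card_sdiff_of_subset hT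
  rw [← hUT, ← Finset.card_powersetCard (k - T.card) (U \ T)]
  apply Finset.card_bij' (fun W _ => W \ T) (fun W _ => W ∪ T)
  · intro W hW
    obtain ⟨hW1, hW2⟩ := Finset.mem_filter.mp hW
    obtain ⟨hWU, hWk⟩ := Finset.mem_powersetCard.mp hW1
    refine Finset.mem_powersetCard.mpr ⟨Finset.sdiff_subset_sdiff hWU (le_refl T), ?_⟩
    rw [Finset.card_sdiff_of_subset hW2, hWk]
  · intro W hW
    obtain ⟨hWU, hWk⟩ := Finset.mem_powersetCard.mp hW
    have hdisj : Disjoint W T :=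
      Finset.disjoint_of_subset_left hWU (Finset.sdiff_disjoint)
    refine Finset.mem_filter.mpr ⟨Finset.mem_powersetCard.mpr ⟨?_, ?_⟩, ?_⟩
    · exact Finset.union_subset (hWU.trans (Finset.sdiff_subset)) hT
    · rw [Finset.card_union_of_disjoint hdisj, hWk]
      omega
    · exact Finset.subset_union_right
  · intro W hW
    obtain ⟨hW1, hW2⟩ := Finset.mem_filter.mp hW
    exact Finset.sdiff_union_of_subset hW2
  · intro W hW
    obtain ⟨hWU, hWk⟩ := Finset.mem_powersetCard.mp hW
    have hdisj : Disjoint W T :=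
      Finset.disjoint_of_subset_left hWU (Finset.sdiff_disjoint)
    rw [Finset.union_sdiff_distrib, Finset.sdiff_self, Finset.union_empty]
    exact Finset.sdiff_eq_self_of_disjoint hdisj

/-- the sign pattern of a crossing: either a fall or a rise -/
lemma cross_pattern (P : Pre H b E S N) {x y : Edge} (hx : x ∈ E) (hy : y ∈ E)
    (hc : cross H x y) :
    (hv H x (pp x y) < hv H y (pp x y) ∧ hv H y (qq x y) < hv H x (qq x y)) ∨
    (hv H y (pp x y) < hv H x (pp x y) ∧ hv H x (qq x y) < hv H y (qq x y)) := by
  obtain ⟨hcol, hind, hov, hni⟩ := hc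
  have hane := Good.ne_at_pp P hx hy hov hind.1
  have hbne := Good.ne_at_qq P hx hy hov hind.2.2.2
  by_cases hp : hv H x (pp x y) < hv H y (pp x y)
  · left
    refine ⟨hp, ?_⟩
    rcases lt_or_gt_of_ne hbne with h | h
    · exact absurd (iff_of_true hp h) hni
    · exact h
  · right
    have hp' : hv H y (pp x y) < hv H x (pp x y) :=
      lt_of_le_of_ne (not_lt.mp hp) hane.symm
    refine ⟨hp', ?_⟩
    rcases lt_or_gt_of_ne hbne with h | h
    · exact h
    · exact absurd (iff_of_false hp (not_lt_of_gt h)) hni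

/-- THE MASTER COUNTING INEQUALITY -/
theorem master {n k : ℕ} (P : Pre H b E (Finset.range n) N)
    (hk : 4 ≤ k) (hkn : k ≤ n) :
    E.card * Nat.choose (n-2) (k-2) ≤
      4 * k * Nat.choose n k + (crossSet H E).card * Nat.choose (n-4) (k-4) := by
  classical
  set pk := Finset.powersetCard k (Finset.range n) with hpk
  -- per-subset bound
  have hper : ∀ T ∈ pk, (E.filter fun x => el x ∈ T ∧ er x ∈ T).card
      ≤ 4 * k + (crossSet H (E.filter fun x => el x ∈ T ∧ er x ∈ T)).card := by
    intro T hT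
    obtain ⟨hTU, hTk⟩ := Finset.mem_powersetCard.mp hT
    have PT : Pre H b (E.filter fun x => el x ∈ T ∧ er x ∈ T) T N := by
      have Psub := P.subset (Finset.filter_subset (fun x => el x ∈ T ∧ er x ∈ T) E)
      refine ⟨Psub.lr, Psub.erN, ?_, Psub.vl, Psub.vr, Psub.vint,
        Psub.esimp, Psub.mono, Psub.samecol⟩
      intro x hx
      exact (Finset.mem_filter.mp hx).2
    have := PT.prune
    rwa [hTk] at this
  -- sum of edge counts over subsets
  have hsum1 : ∑ T ∈ pk, (E.filter fun x => el x ∈ T ∧ er x ∈ T).card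
      = E.card * Nat.choose (n-2) (k-2) := by
    have h1 : ∀ T : Finset ℕ, (E.filter fun x => el x ∈ T ∧ er x ∈ T).card
        = ∑ x ∈ E, if el x ∈ T ∧ er x ∈ T then 1 else 0 := by
      intro T; rw [Finset.card_filter]
    simp only [h1]
    rw [Finset.sum_comm]
    have h2 : ∀ x ∈ E, ∑ T ∈ pk, (if el x ∈ T ∧ er x ∈ T then 1 else 0)
        = Nat.choose (n-2) (k-2) := by
      intro x hx
      have hlr := P.lr x hx
      have hin := P.inS x hx
      have hcond : ∀ T : Finset ℕ, (el x ∈ T ∧ er x ∈ T) ↔ ({el x, er x} : Finset ℕ) ⊆ T := by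
        intro T
        simp [Finset.insert_subset_iff]
      have : ∑ T ∈ pk, (if el x ∈ T ∧ er x ∈ T then 1 else 0)
          = (pk.filter fun T => ({el x, er x} : Finset ℕ) ⊆ T).card := by
        rw [Finset.card_filter]
        apply Finset.sum_congr rfl
        intro T _
        simp only [hcond]
      rw [this]
      have hsub : ({el x, er x} : Finset ℕ) ⊆ Finset.range n := by
        intro a ha
        simp only [Finset.mem_insert, Finset.mem_singleton] at ha
        rcases ha with rfl | rfl
        · exact hin.1
        · exact hin.2
      have hc2 : ({el x, er x} : Finset ℕ).card = 2 := by
        rw [Finset.card_insert_of_notMem (by simp only [Finset.mem_singleton, Finset.mem_insert]; omega), Finset.card_singleton]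
      have := count_supersets hsub (by omega : ({el x, er x} : Finset ℕ).card ≤ k)
      rw [hc2, Finset.card_range] at this
      rw [hpk, this]
    rw [Finset.sum_congr rfl h2, Finset.sum_const, smul_eq_mul]
  -- sum of crossing counts over subsets
  have hsum2 : ∑ T ∈ pk, (crossSet H (E.filter fun x => el x ∈ T ∧ er x ∈ T)).card
      ≤ (crossSet H E).card * Nat.choose (n-4) (k-4) := by
    have hsub1 : ∀ T : Finset ℕ, crossSet H (E.filter fun x => el x ∈ T ∧ er x ∈ T)
        ⊆ (crossSet H E).filter fun c =>
            el c.1 ∈ T ∧ er c.1 ∈ T ∧ el c.2 ∈ T ∧ er c.2 ∈ T := by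
      intro T c hc
      obtain ⟨hc1, hc2, hcc⟩ := mem_crossSet.mp hc
      obtain ⟨hc1E, hc1T⟩ := Finset.mem_filter.mp hc1
      obtain ⟨hc2E, hc2T⟩ := Finset.mem_filter.mp hc2
      exact Finset.mem_filter.mpr ⟨mem_crossSet.mpr ⟨hc1E, hc2E, hcc⟩,
        hc1T.1, hc1T.2, hc2T.1, hc2T.2⟩
    calc ∑ T ∈ pk, (crossSet H (E.filter fun x => el x ∈ T ∧ er x ∈ T)).card
        ≤ ∑ T ∈ pk, ((crossSet H E).filter fun c =>
            el c.1 ∈ T ∧ er c.1 ∈ T ∧ el c.2 ∈ T ∧ er c.2 ∈ T).card :=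
          Finset.sum_le_sum fun T _ => Finset.card_le_card (hsub1 T)
      _ ≤ (crossSet H E).card * Nat.choose (n-4) (k-4) := by
          have h1 : ∀ T : Finset ℕ, ((crossSet H E).filter fun c =>
              el c.1 ∈ T ∧ er c.1 ∈ T ∧ el c.2 ∈ T ∧ er c.2 ∈ T).card
              = ∑ c ∈ crossSet H E,
                  if el c.1 ∈ T ∧ er c.1 ∈ T ∧ el c.2 ∈ T ∧ er c.2 ∈ T then 1 else 0 := by
            intro T; rw [Finset.card_filter]
          simp only [h1]
          rw [Finset.sum_comm]
          have h2 : ∀ c ∈ crossSet H E,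
              ∑ T ∈ pk, (if el c.1 ∈ T ∧ er c.1 ∈ T ∧ el c.2 ∈ T ∧ er c.2 ∈ T then 1 else 0)
              ≤ Nat.choose (n-4) (k-4) := by
            intro c hc
            obtain ⟨hc1, hc2, hcc⟩ := mem_crossSet.mp hc
            obtain ⟨hcol, hind, hov, hni⟩ := hcc
            have hlr1 := P.lr c.1 hc1
            have hlr2 := P.lr c.2 hc2
            have hin1 := P.inS c.1 hc1
            have hin2 := P.inS c.2 hc2
            obtain ⟨i1, i2, i3, i4⟩ := hind
            have hcond : ∀ T : Finset ℕ, (el c.1 ∈ T ∧ er c.1 ∈ T ∧ el c.2 ∈ T ∧ er c.2 ∈ T)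
                ↔ ({el c.1, er c.1, el c.2, er c.2} : Finset ℕ) ⊆ T := by
              intro T
              simp [Finset.insert_subset_iff]
            have heq : ∑ T ∈ pk, (if el c.1 ∈ T ∧ er c.1 ∈ T ∧ el c.2 ∈ T ∧ er c.2 ∈ T then 1 else 0)
                = (pk.filter fun T =>
                    ({el c.1, er c.1, el c.2, er c.2} : Finset ℕ) ⊆ T).card := by
              rw [Finset.card_filter]
              apply Finset.sum_congr rfl
              intro T _
              simp only [hcond]
            rw [heq]
            have hsub : ({el c.1, er c.1, el c.2, er c.2} : Finset ℕ) ⊆ Finset.range n := by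
              intro a ha
              simp only [Finset.mem_insert, Finset.mem_singleton] at ha
              rcases ha with rfl | rfl | rfl | rfl
              · exact hin1.1
              · exact hin1.2
              · exact hin2.1
              · exact hin2.2
            have hov' : el c.1 < er c.2 ∧ el c.2 < er c.1 := by
              unfold ovl at hov
              simp only [sup_lt_iff, lt_inf_iff] at hov
              omega
            have hc4 : ({el c.1, er c.1, el c.2, er c.2} : Finset ℕ).card = 4 := by
              rw [Finset.card_insert_of_notMem (by simp only [Finset.mem_singleton, Finset.mem_insert]; omega),
                Finset.card_insert_of_notMem (by simp only [Finset.mem_singleton, Finset.mem_insert]; omega),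
                Finset.card_insert_of_notMem (by simp only [Finset.mem_singleton, Finset.mem_insert]; omega),
                Finset.card_singleton]
            have := count_supersets hsub
              (by omega : ({el c.1, er c.1, el c.2, er c.2} : Finset ℕ).card ≤ k)
            rw [hc4, Finset.card_range] at this
            rw [hpk, this]
          calc ∑ c ∈ crossSet H E, ∑ T ∈ pk,
                (if el c.1 ∈ T ∧ er c.1 ∈ T ∧ el c.2 ∈ T ∧ er c.2 ∈ T then 1 else 0)
              ≤ ∑ _c ∈ crossSet H E, Nat.choose (n-4) (k-4) :=
                Finset.sum_le_sum h2
            _ = (crossSet H E).card * Nat.choose (n-4) (k-4) := by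
                rw [Finset.sum_const, smul_eq_mul]
  -- combine
  have hcomb : ∑ T ∈ pk, (E.filter fun x => el x ∈ T ∧ er x ∈ T).card
      ≤ ∑ T ∈ pk, (4 * k + (crossSet H (E.filter fun x => el x ∈ T ∧ er x ∈ T)).card) :=
    Finset.sum_le_sum hper
  rw [Finset.sum_add_distrib, Finset.sum_const, smul_eq_mul, hsum1] at hcomb
  have hcardpk : pk.card = Nat.choose n k := by
    rw [hpk, Finset.card_powersetCard, Finset.card_range]
  rw [hcardpk, mul_comm (Nat.choose n k) (4 * k)] at hcomb
  exact le_trans hcomb (Nat.add_le_add_left hsum2 _)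

end Pre

/-! ## Concrete part: edges from a totally positive matrix -/

section Concrete

variable {n : ℕ} (A : Matrix (Fin n) (Fin n) ℝ) (b : ℝ)

/-- the matrix read as a function `column → row → ℝ` (with junk outside) -/
def HM : ℕ → ℕ → ℝ := fun c i =>
  if h : i < n ∧ c < n then A ⟨i, h.1⟩ ⟨c, h.2⟩ else 0

open scoped Classical in
/-- rows where column c has value b -/
noncomputable def Zc (c : ℕ) : Finset ℕ :=
  (Finset.range n).filter fun i => HM A c i = b

noncomputable def colList (c : ℕ) : List ℕ := (Zc A b c).sort (· ≤ ·)

noncomputable def colEdges (c : ℕ) : List Edge :=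
  ((colList A b c).zip (colList A b c).tail).map fun p => (p.1, p.2, c)

open scoped Classical in
noncomputable def Efull : Finset Edge :=
  (Finset.range n).biUnion fun c => (colEdges A b c).toFinset

lemma map_fst_zip_tail : ∀ (L : List ℕ),
    (L.zip L.tail).map Prod.fst = L.take (L.length - 1) := by
  intro L
  induction L with
  | nil => rfl
  | cons a t ih =>
    cases t with
    | nil => rfl
    | cons c t' =>
      have ih' : ((c :: t').zip t').map Prod.fst = (c :: t').take t'.length := by
        have h2 := ih
        simp only [List.tail_cons, List.length_cons, Nat.add_sub_cancel] at h2
        exact h2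
      show ((a :: c :: t').zip (c :: t')).map Prod.fst = (a :: c :: t').take (t'.length + 1)
      rw [List.zip_cons_cons, List.map_cons, List.take_succ_cons, ih']

lemma colList_sorted (c : ℕ) : (colList A b c).Pairwise (· < ·) :=
  (Finset.sortedLT_sort _).pairwise

lemma mem_colList {c i : ℕ} : i ∈ colList A b c ↔ i ∈ Zc A b c := Finset.mem_sort _

/-- membership description of edges -/
lemma mem_Efull {x : Edge} : x ∈ Efull A b ↔ ec x < n ∧
    ∃ (i : ℕ) (h : i + 1 < (colList A b (ec x)).length),
      (colList A b (ec x))[i]'(by omega) = el x ∧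
      (colList A b (ec x))[i+1]'h = er x := by
  classical
  unfold Efull
  rw [Finset.mem_biUnion]
  constructor
  · rintro ⟨c, hc, hx⟩
    rw [List.mem_toFinset] at hx
    unfold colEdges at hx
    rw [List.mem_map] at hx
    obtain ⟨p, hp, hpe⟩ := hx
    have hcx : ec x = c := by rw [← hpe]; rfl
    obtain ⟨⟨i, hi⟩, hget⟩ := List.mem_iff_get.mp hp
    rw [List.length_zip, List.length_tail] at hi
    have hi' : i + 1 < (colList A b c).length := by omega
    refine ⟨by rw [hcx]; exact Finset.mem_range.mp hc, i, by rw [hcx]; exact hi', ?_, ?_⟩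
    · have := List.getElem_zip (l := colList A b c) (l' := (colList A b c).tail)
        (i := i) (h := by rw [List.length_zip, List.length_tail]; omega)
      rw [List.get_eq_getElem, this] at hget
      have h1 : (colList A b c)[i] = p.1 := congrArg Prod.fst hget
      have hel : el x = p.1 := by rw [← hpe]; rfl
      simp only [hcx]
      rw [h1, hel]
    · have := List.getElem_zip (l := colList A b c) (l' := (colList A b c).tail)
        (i := i) (h := by rw [List.length_zip, List.length_tail]; omega)
      rw [List.get_eq_getElem, this] at hget
      have h2 : ((colList A b c).tail)[i]'(by rw [List.length_tail]; omega) = p.2 :=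
        congrArg Prod.snd hget
      rw [List.getElem_tail] at h2
      have her : er x = p.2 := by rw [← hpe]; rfl
      simp only [hcx]
      rw [h2, her]
  · rintro ⟨hc, i, hi, hel, her⟩
    refine ⟨ec x, Finset.mem_range.mpr hc, ?_⟩
    rw [List.mem_toFinset]
    unfold colEdges
    rw [List.mem_map]
    refine ⟨((colList A b (ec x))[i]'(by omega), (colList A b (ec x))[i+1]'hi), ?_, ?_⟩
    · rw [List.mem_iff_get]
      refine ⟨⟨i, by rw [List.length_zip, List.length_tail]; omega⟩, ?_⟩
      rw [List.get_eq_getElem, List.getElem_zip, List.getElem_tail]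
    · rw [hel, her]
      show (el x, er x, ec x) = x
      rfl

lemma colList_get_mem_Zc {c i : ℕ} (h : i < (colList A b c).length) :
    (colList A b c)[i] ∈ Zc A b c := by
  rw [← mem_colList (A := A) (b := b)]
  exact List.get_mem _ _

lemma Zc_mem {c i : ℕ} (h : i ∈ Zc A b c) : i < n ∧ HM A c i = b := by
  classical
  unfold Zc at h
  rw [Finset.mem_filter, Finset.mem_range] at h
  exact h

lemma colList_lt {c : ℕ} {i j : ℕ} (hij : i < j) (hj : j < (colList A b c).length) :
    (colList A b c)[i]'(by omega) < (colList A b c)[j] := by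
  have h := (colList_sorted A b c).rel_get_of_lt
    (a := ⟨i, by omega⟩) (b := ⟨j, hj⟩) (by simp only [Fin.mk_lt_mk]; omega)
  exact h

/-- no zero of column c lies strictly between two consecutive zeros -/
lemma colList_consec {c : ℕ} {i : ℕ} (hi : i + 1 < (colList A b c).length)
    {m : ℕ} (h1 : (colList A b c)[i]'(by omega) < m)
    (h2 : m < (colList A b c)[i+1]'hi) (hm : m ∈ Zc A b c) : False := by
  rw [← mem_colList (A := A) (b := b)] at hm
  obtain ⟨j, hj, hget⟩ := List.mem_iff_getElem.mp hm
  rcases lt_or_ge j (i+1) with hc | hc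
  · rcases lt_or_ge j i with hc2 | hc2
    · have := colList_lt A b hc2 (by omega : i < (colList A b c).length)
      omega
    · have : j = i := by omega
      subst this; omega
  · rcases lt_or_ge j (i+2) with hc2 | hc2
    · have : j = i + 1 := by omega
      subst this; omega
    · have := colList_lt A b (show i+1 < j by omega) hj
      omega

/-! ### consequences of total positivity -/

lemma entry_pos {A : Matrix (Fin n) (Fin n) ℝ} (hTP : TotallyPositive A)
    (i j : Fin n) : 0 < A i j := by
  have hsm : StrictMono (fun _ : Fin 1 => i) := by
    intro a b hab
    have h1 := a.isLt; have h2 := b.isLt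
    rw [Fin.lt_def] at hab; omega
  have hsg : StrictMono (fun _ : Fin 1 => j) := by
    intro a b hab
    have h1 := a.isLt; have h2 := b.isLt
    rw [Fin.lt_def] at hab; omega
  have h := hTP 1 _ _ hsm hsg
  rwa [Matrix.det_fin_one, Matrix.submatrix_apply] at h

lemma minor2 {A : Matrix (Fin n) (Fin n) ℝ} (hTP : TotallyPositive A)
    {i i' j j' : Fin n} (hi : i < i') (hj : j < j') :
    A i j' * A i' j < A i j * A i' j' := by
  have hsm : StrictMono ![i, i'] := by
    intro a b hab
    fin_cases a <;> fin_cases b <;>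
      simp_all [Matrix.cons_val_zero, Matrix.cons_val_one, Matrix.head_cons]
  have hsg : StrictMono ![j, j'] := by
    intro a b hab
    fin_cases a <;> fin_cases b <;>
      simp_all [Matrix.cons_val_zero, Matrix.cons_val_one, Matrix.head_cons]
  have h := hTP 2 ![i,i'] ![j,j'] hsm hsg
  rw [Matrix.det_fin_two] at h
  simp only [Matrix.submatrix_apply, Matrix.cons_val_zero, Matrix.cons_val_one,
    Matrix.head_cons] at h
  linarith

lemma hm_eq {A : Matrix (Fin n) (Fin n) ℝ} {i c : ℕ} (hi : i < n) (hc : c < n) :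
    HM A c i = A ⟨i, hi⟩ ⟨c, hc⟩ := by
  unfold HM; rw [dif_pos ⟨hi, hc⟩]

lemma sm_cols {A : Matrix (Fin n) (Fin n) ℝ} (hTP : TotallyPositive A)
    {c c' : ℕ} (hcc : c < c') (hc' : c' < n) :
    ∀ i i', i < i' → i' ≤ n - 1 → HM A c i ≤ HM A c' i → HM A c i' < HM A c' i' := by
  intro i i' hii hiN hle
  have hi : i < n := by omega
  have hi' : i' < n := by omega
  have hc : c < n := by omega
  rw [hm_eq hi hc, hm_eq hi hc'] at hle
  rw [hm_eq hi' hc, hm_eq hi' hc']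
  have hmin := minor2 hTP (show (⟨i,hi⟩ : Fin n) < ⟨i',hi'⟩ by rw [Fin.lt_def]; exact hii)
    (show (⟨c,hc⟩ : Fin n) < ⟨c',hc'⟩ by rw [Fin.lt_def]; exact hcc)
  have p1 := entry_pos hTP (⟨i,hi⟩ : Fin n) (⟨c,hc⟩ : Fin n)
  have p2 := entry_pos hTP (⟨i',hi'⟩ : Fin n) (⟨c,hc⟩ : Fin n)
  have h3 : A ⟨i,hi⟩ ⟨c,hc⟩ * A ⟨i',hi'⟩ ⟨c,hc⟩ ≤ A ⟨i,hi⟩ ⟨c',hc'⟩ * A ⟨i',hi'⟩ ⟨c,hc⟩ :=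
    mul_le_mul_of_nonneg_right hle p2.le
  have h4 : A ⟨i,hi⟩ ⟨c,hc⟩ * A ⟨i',hi'⟩ ⟨c,hc⟩ < A ⟨i,hi⟩ ⟨c,hc⟩ * A ⟨i',hi'⟩ ⟨c',hc'⟩ :=
    lt_of_le_of_lt h3 hmin
  exact lt_of_mul_lt_mul_left h4 p1.le

lemma k22_aux {A : Matrix (Fin n) (Fin n) ℝ} {b : ℝ} (hTP : TotallyPositive A)
    {r r' c c' : ℕ} (hr : r < r') (hcc : c < c') (hr' : r' < n) (hc'n : c' < n)
    (h1 : HM A c r = b) (h2 : HM A c r' = b) (h3 : HM A c' r = b)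
    (h4 : HM A c' r' = b) : False := by
  have hrn : r < n := by omega
  have hcn : c < n := by omega
  rw [hm_eq hrn hcn] at h1
  rw [hm_eq hr' hcn] at h2
  rw [hm_eq hrn hc'n] at h3
  rw [hm_eq hr' hc'n] at h4
  have hmin := minor2 hTP (show (⟨r,hrn⟩ : Fin n) < ⟨r',hr'⟩ by rw [Fin.lt_def]; exact hr)
    (show (⟨c,hcn⟩ : Fin n) < ⟨c',hc'n⟩ by rw [Fin.lt_def]; exact hcc)
  rw [h1, h2, h3, h4] at hmin
  exact lt_irrefl _ hmin

lemma k22 {A : Matrix (Fin n) (Fin n) ℝ} {b : ℝ} (hTP : TotallyPositive A)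
    {r r' c c' : ℕ} (hr : r < r') (hcc : c ≠ c') (hr' : r' < n)
    (hcn : c < n) (hc'n : c' < n)
    (h1 : HM A c r = b) (h2 : HM A c r' = b) (h3 : HM A c' r = b)
    (h4 : HM A c' r' = b) : False := by
  rcases lt_or_gt_of_ne hcc with h | h
  · exact k22_aux hTP hr h hr' hc'n h1 h2 h3 h4
  · exact k22_aux hTP hr h hr' hcn h3 h4 h1 h2

/-- The full edge system satisfies the Pre hypotheses. -/
lemma pre_Efull {A : Matrix (Fin n) (Fin n) ℝ} {b : ℝ} (hTP : TotallyPositive A) :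
    Pre (HM A) b (Efull A b) (Finset.range n) (n-1) := by
  have hmem : ∀ x ∈ Efull A b, ec x < n ∧ el x < er x ∧ el x ∈ Zc A b (ec x) ∧
      er x ∈ Zc A b (ec x) := by
    intro x hx
    obtain ⟨hc, i, hi, hel, her⟩ := (mem_Efull A b).mp hx
    refine ⟨hc, ?_, ?_, ?_⟩
    · rw [← hel, ← her]; exact colList_lt A b (by omega) hi
    · rw [← hel]; exact colList_get_mem_Zc A b (by omega)
    · rw [← her]; exact colList_get_mem_Zc A b hi
  constructor
  · intro x hx; exact (hmem x hx).2.1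
  · intro x hx
    have := (Zc_mem (A := A) (b := b) (hmem x hx).2.2.2).1
    omega
  · intro x hx
    have h1 := (Zc_mem (A := A) (b := b) (hmem x hx).2.2.1).1
    have h2 := (Zc_mem (A := A) (b := b) (hmem x hx).2.2.2).1
    exact ⟨Finset.mem_range.mpr h1, Finset.mem_range.mpr h2⟩
  · intro x hx; exact (Zc_mem A b (hmem x hx).2.2.1).2
  · intro x hx; exact (Zc_mem A b (hmem x hx).2.2.2).2
  · -- vint
    intro x hx m hm1 hm2 heq
    obtain ⟨hc, i, hi, hel, her⟩ := (mem_Efull A b).mp hx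
    have hmn : m < n := by
      have := (Zc_mem (A := A) (b := b) (hmem x hx).2.2.2).1
      omega
    have hmZ : m ∈ Zc A b (ec x) := by
      classical
      unfold Zc
      rw [Finset.mem_filter, Finset.mem_range]
      exact ⟨hmn, heq⟩
    exact colList_consec A b hi (by rw [hel]; exact hm1) (by rw [her]; exact hm2) hmZ
  · -- esimp
    intro x hx y hy hel her
    by_cases hec : ec x = ec y
    · show (x.1, x.2.1, x.2.2) = (y.1, y.2.1, y.2.2)
      rw [show x.1 = y.1 from hel, show x.2.1 = y.2.1 from her,
        show x.2.2 = y.2.2 from hec]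
    · exfalso
      have f1 := hmem x hx
      have f2 := hmem y hy
      refine k22 hTP f1.2.1 hec ((Zc_mem A b f1.2.2.2).1) f1.1 f2.1
        ((Zc_mem A b f1.2.2.1).2) ((Zc_mem A b f1.2.2.2).2) ?_ ?_
      · rw [hel]; exact (Zc_mem A b f2.2.2.1).2
      · rw [her]; exact (Zc_mem A b f2.2.2.2).2
  · -- mono
    intro x hx y hy hec
    rcases lt_or_gt_of_ne hec with h | h
    · exact Or.inl (sm_cols hTP h (hmem y hy).1)
    · exact Or.inr (sm_cols hTP h (hmem x hx).1)
  · -- samecol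
    intro x hx y hy hne hec hov
    obtain ⟨hc, i, hi, hel, her⟩ := (mem_Efull A b).mp hx
    obtain ⟨hc', j, hj, hel', her'⟩ := (mem_Efull A b).mp hy
    have hL : colList A b (ec y) = colList A b (ec x) := by rw [hec]
    simp only [hL] at hel' her' hj
    have hij : i ≠ j := by
      intro hij
      subst hij
      apply hne
      show (x.1, x.2.1, x.2.2) = (y.1, y.2.1, y.2.2)
      rw [show x.1 = y.1 from hel.symm.trans hel',
        show x.2.1 = y.2.1 from her.symm.trans her',
        show x.2.2 = y.2.2 from hec]
    unfold ovl at hov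
    simp only [sup_lt_iff, lt_inf_iff] at hov
    rcases lt_or_gt_of_ne hij with h | h
    · -- er x = L[i+1] ≤ L[j] = el y
      have : er x ≤ el y := by
        rw [← her, ← hel']
        rcases Nat.eq_or_lt_of_le (show i+1 ≤ j by omega) with he | hlt
        · exact le_of_eq (by subst he; rfl)
        · exact le_of_lt (colList_lt A b hlt (by omega))
      omega
    · have : er y ≤ el x := by
        rw [← her', ← hel]
        rcases Nat.eq_or_lt_of_le (show j+1 ≤ i by omega) with he | hlt
        · exact le_of_eq (by subst he; rfl)
        · exact le_of_lt (colList_lt A b hlt (by omega))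
      omega

lemma cross_unique_aux {f g : ℕ → ℝ} {N q1 p2 : ℕ}
    (hSM : ∀ i i', i < i' → i' ≤ N → f i ≤ g i → f i' < g i')
    (hq : q1 ≤ p2) (hp2 : p2 ≤ N) (h1 : f q1 < g q1) (h2 : g p2 < f p2) : False := by
  rcases Nat.eq_or_lt_of_le hq with he | hlt
  · subst he; linarith
  · have := hSM q1 p2 hlt hp2 h1.le
    linarith

lemma not_ovl_cases {x y : Edge} (h : ¬ ovl x y) (hx : el x < er x)
    (hy : el y < er y) : er x ≤ el y ∨ er y ≤ el x := by
  unfold ovl at h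
  rw [not_lt] at h
  rcases inf_le_iff.mp h with h' | h' <;> rcases le_sup_iff.mp h' with h'' | h''
  · omega
  · left; omega
  · right; omega
  · omega

/-- at most one crossing per ordered column pair -/
lemma crossSet_card {A : Matrix (Fin n) (Fin n) ℝ} {b : ℝ} (hTP : TotallyPositive A) :
    (crossSet (HM A) (Efull A b)).card ≤ n * n := by
  classical
  have P := pre_Efull (b := b) hTP
  have h : (crossSet (HM A) (Efull A b)).card ≤ ((Finset.range n) ×ˢ (Finset.range n)).card := by
    apply Finset.card_le_card_of_injOn (fun q => (ec q.1, ec q.2))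
    · intro q hq
      obtain ⟨h1, h2, hcc⟩ := Pre.mem_crossSet.mp hq
      simp only [Finset.mem_coe]
      rw [Finset.mem_product, Finset.mem_range, Finset.mem_range]
      exact ⟨((mem_Efull A b).mp h1).1, ((mem_Efull A b).mp h2).1⟩
    · intro c hc d hd heq
      obtain ⟨hc1, hc2, hcc⟩ := Pre.mem_crossSet.mp (Finset.mem_coe.mp hc)
      obtain ⟨hd1, hd2, hdc⟩ := Pre.mem_crossSet.mp (Finset.mem_coe.mp hd)
      simp only at heq
      rw [Prod.mk.injEq] at heq
      obtain ⟨hex, hey⟩ := heq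
      have hcol : ec c.1 ≠ ec c.2 := ne_of_lt hcc.1
      have pat1 := Pre.cross_pattern P hc1 hc2 hcc
      have pat2 := Pre.cross_pattern P hd1 hd2 hdc
      set f : ℕ → ℝ := fun i => hv (HM A) c.1 i with hf
      set g : ℕ → ℝ := fun i => hv (HM A) c.2 i with hg
      have t1 : ∀ i, hv (HM A) d.1 i = f i := fun i => by
        rw [hf]; unfold hv; rw [← hex]
      have t2 : ∀ i, hv (HM A) d.2 i = g i := fun i => by
        rw [hg]; unfold hv; rw [← hey]
      have hpq1 : pp c.1 c.2 < qq c.1 c.2 := hcc.2.2.1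
      have hpq2 : pp d.1 d.2 < qq d.1 d.2 := hdc.2.2.1
      have hN1 : qq c.1 c.2 ≤ n - 1 := le_trans (min_le_left _ _) (P.erN c.1 hc1)
      have hN1' : qq d.1 d.2 ≤ n - 1 := le_trans (min_le_left _ _) (P.erN d.1 hd1)
      have hN2 : pp d.1 d.2 ≤ n - 1 := le_trans hpq2.le hN1'
      have hN2' : pp c.1 c.2 ≤ n - 1 := le_trans hpq1.le hN1
      have hfinish : (qq c.1 c.2 ≤ pp d.1 d.2 ∨ qq d.1 d.2 ≤ pp c.1 c.2) → False := by
        intro hor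
        rcases P.mono c.1 hc1 c.2 hc2 hcol with hm | hm
        · have hmf : ∀ i i', i < i' → i' ≤ n - 1 → f i ≤ g i → f i' < g i' := hm
          have rise1 : g (pp c.1 c.2) < f (pp c.1 c.2) ∧ f (qq c.1 c.2) < g (qq c.1 c.2) := by
            rcases pat1 with ⟨u, v⟩ | h
            · exact absurd (hmf _ _ hpq1 hN1 u.le) (not_lt_of_gt v)
            · exact h
          have rise2 : g (pp d.1 d.2) < f (pp d.1 d.2) ∧ f (qq d.1 d.2) < g (qq d.1 d.2) := by
            rcases pat2 with ⟨u, v⟩ | ⟨u, v⟩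
            · rw [t1, t2] at u v
              exact absurd (hmf _ _ hpq2 hN1' u.le) (not_lt_of_gt v)
            · rw [t1, t2] at u v
              exact ⟨u, v⟩
          rcases hor with h | h
          · exact cross_unique_aux hmf h hN2 rise1.2 rise2.1
          · exact cross_unique_aux hmf h hN2' rise2.2 rise1.1
        · have hmg : ∀ i i', i < i' → i' ≤ n - 1 → g i ≤ f i → g i' < f i' := hm
          have fall1 : f (pp c.1 c.2) < g (pp c.1 c.2) ∧ g (qq c.1 c.2) < f (qq c.1 c.2) := by
            rcases pat1 with h | ⟨u, v⟩
            · exact h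
            · exact absurd (hmg _ _ hpq1 hN1 u.le) (not_lt_of_gt v)
          have fall2 : f (pp d.1 d.2) < g (pp d.1 d.2) ∧ g (qq d.1 d.2) < f (qq d.1 d.2) := by
            rcases pat2 with ⟨u, v⟩ | ⟨u, v⟩
            · rw [t1, t2] at u v
              exact ⟨u, v⟩
            · rw [t1, t2] at u v
              exact absurd (hmg _ _ hpq2 hN1' u.le) (not_lt_of_gt v)
          rcases hor with h | h
          · exact cross_unique_aux hmg h hN2 fall1.2 fall2.1
          · exact cross_unique_aux hmg h hN2' fall2.2 fall1.1
      by_cases he1 : c.1 = d.1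
      · by_cases he2 : c.2 = d.2
        · exact Prod.ext he1 he2
        · exfalso
          apply hfinish
          have hndis := P.samecol c.2 hc2 d.2 hd2 he2 hey
          rcases not_ovl_cases hndis (P.lr c.2 hc2) (P.lr d.2 hd2) with h | h
          · left
            calc qq c.1 c.2 ≤ er c.2 := min_le_right _ _
              _ ≤ el d.2 := h
              _ ≤ pp d.1 d.2 := le_max_right _ _
          · right
            calc qq d.1 d.2 ≤ er d.2 := min_le_right _ _
              _ ≤ el c.2 := h
              _ ≤ pp c.1 c.2 := le_max_right _ _
      · exfalso
        apply hfinish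
        have hndis := P.samecol c.1 hc1 d.1 hd1 he1 hex
        rcases not_ovl_cases hndis (P.lr c.1 hc1) (P.lr d.1 hd1) with h | h
        · left
          calc qq c.1 c.2 ≤ er c.1 := min_le_left _ _
            _ ≤ el d.1 := h
            _ ≤ pp d.1 d.2 := le_max_left _ _
        · right
          calc qq d.1 d.2 ≤ er d.1 := min_le_left _ _
            _ ≤ el c.1 := h
            _ ≤ pp c.1 c.2 := le_max_left _ _
  rw [Finset.card_product, Finset.card_range] at h
  exact h

lemma colEdges_nodup (c : ℕ) : (colEdges A b c).Nodup := by
  unfold colEdges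
  apply List.Nodup.map
  · intro p q hpq
    simp only at hpq
    rw [Prod.mk.injEq, Prod.mk.injEq] at hpq
    exact Prod.ext hpq.1 hpq.2.1
  · have hmap := map_fst_zip_tail (colList A b c)
    have hnd : ((colList A b c).take ((colList A b c).length - 1)).Nodup :=
      List.Nodup.sublist (List.take_prefix _ _).sublist (Finset.sort_nodup _ _)
    rw [← hmap] at hnd
    exact List.Nodup.of_map _ hnd

lemma colEdges_length (c : ℕ) : (colEdges A b c).length = (Zc A b c).card - 1 := by
  unfold colEdges
  rw [List.length_map, List.length_zip, List.length_tail]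
  rw [show (colList A b c).length = (Zc A b c).card from Finset.length_sort _]
  exact min_eq_right (by omega)

lemma mem_colEdges_ec {c : ℕ} {x : Edge} (h : x ∈ colEdges A b c) : ec x = c := by
  unfold colEdges at h
  rw [List.mem_map] at h
  obtain ⟨p, -, rfl⟩ := h
  rfl

lemma card_Efull : (Efull A b).card = ∑ c ∈ Finset.range n, ((Zc A b c).card - 1) := by
  classical
  unfold Efull
  rw [Finset.card_biUnion]
  · apply Finset.sum_congr rfl
    intro c _
    rw [List.toFinset_card_of_nodup (colEdges_nodup A b c), colEdges_length]
  · intro c1 _ c2 _ hne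
    rw [Function.onFun, Finset.disjoint_left]
    intro x hx1 hx2
    rw [List.mem_toFinset] at hx1 hx2
    exact hne ((mem_colEdges_ec A b hx1).symm.trans (mem_colEdges_ec A b hx2))

lemma m_eq : (Finset.univ.filter fun q : Fin n × Fin n => A q.1 q.2 = b).card
    = ∑ c ∈ Finset.range n, (Zc A b c).card := by
  classical
  rw [Finset.card_eq_sum_card_fiberwise
    (f := fun q : Fin n × Fin n => (q.2 : ℕ)) (t := Finset.range n)
    (fun q _ => Finset.mem_range.mpr q.2.isLt)]
  apply Finset.sum_congr rfl
  intro c hc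
  have hcn := Finset.mem_range.mp hc
  refine Finset.card_bij' (fun q _ => ((q : Fin n × Fin n).1 : ℕ))
    (fun r hr => ((⟨r, (Zc_mem A b hr).1⟩ : Fin n), (⟨c, hcn⟩ : Fin n))) ?_ ?_ ?_ ?_
  · intro q hq
    rw [Finset.mem_filter] at hq
    obtain ⟨hq1, hq2⟩ := hq
    rw [Finset.mem_filter] at hq1
    obtain ⟨-, hqb⟩ := hq1
    unfold Zc
    rw [Finset.mem_filter, Finset.mem_range]
    refine ⟨q.1.isLt, ?_⟩
    rw [hm_eq q.1.isLt hcn]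
    have hq2' : q.2 = (⟨c, hcn⟩ : Fin n) := Fin.ext hq2
    rw [Fin.eta, ← hq2']
    exact hqb
  · intro r hr
    rw [Finset.mem_filter]
    constructor
    · rw [Finset.mem_filter]
      refine ⟨Finset.mem_univ _, ?_⟩
      have h := (Zc_mem A b hr).2
      rwa [hm_eq (Zc_mem A b hr).1 hcn] at h
    · rfl
  · intro q hq
    rw [Finset.mem_filter] at hq
    have hq2' : q.2 = (⟨c, hcn⟩ : Fin n) := Fin.ext hq.2
    exact Prod.ext (Fin.eta _ _) hq2'.symm
  · intro r hr
    rfl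

lemma m_le_e : (Finset.univ.filter fun q : Fin n × Fin n => A q.1 q.2 = b).card
    ≤ (Efull A b).card + n := by
  rw [m_eq, card_Efull]
  calc ∑ c ∈ Finset.range n, (Zc A b c).card
      ≤ ∑ c ∈ Finset.range n, ((Zc A b c).card - 1 + 1) :=
        Finset.sum_le_sum fun c _ => by omega
    _ = (∑ c ∈ Finset.range n, ((Zc A b c).card - 1)) + n := by
        rw [Finset.sum_add_distrib, Finset.sum_const, Finset.card_range,
          smul_eq_mul, mul_one]

end Concrete

lemma choose_id (m r : ℕ) :
    (r+1+1)*(r+1)*Nat.choose (m+1+1) (r+1+1) = (m+1+1)*(m+1)*Nat.choose m r := by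
  have h1 := Nat.add_one_mul_choose_eq (m+1) (r+1)
  have h2 := Nat.add_one_mul_choose_eq m r
  calc (r+1+1)*(r+1)*Nat.choose (m+1+1) (r+1+1)
      = (r+1)*(Nat.choose (m+1+1) (r+1+1)*(r+1+1)) := by ring
    _ = (r+1)*((m+1+1) * Nat.choose (m+1) (r+1)) := by rw [← h1]
    _ = (m+1+1)*(Nat.choose (m+1) (r+1)*(r+1)) := by ring
    _ = (m+1+1)*((m+1)*Nat.choose m r) := by rw [← h2]
    _ = (m+1+1)*(m+1)*Nat.choose m r := by ring

/-- the division-free master inequality -/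
lemma master_nat {n : ℕ} {A : Matrix (Fin n) (Fin n) ℝ} {b : ℝ}
    (hTP : TotallyPositive A) {k : ℕ} (hk4 : 4 ≤ k) (hkn : k ≤ n) :
    (Efull A b).card * ((k-1) * ((n-2) * (n-3))) ≤
      4*(n*((n-1)*((n-2)*(n-3)))) + (n*n) * ((k-1)*((k-2)*(k-3))) := by
  have P := pre_Efull (b := b) hTP
  have hmas := P.master hk4 hkn
  have hX := crossSet_card (b := b) hTP
  obtain ⟨m, rfl⟩ : ∃ m, n = m + 4 := ⟨n - 4, by omega⟩
  obtain ⟨r, rfl⟩ : ∃ r, k = r + 4 := ⟨k - 4, by omega⟩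
  rw [show m+4-2 = m+2 by omega, show r+4-2 = r+2 by omega,
    show m+4-4 = m by omega, show r+4-4 = r by omega] at hmas
  rw [show m+4-1 = m+3 by omega, show m+4-2 = m+2 by omega,
    show m+4-3 = m+1 by omega, show r+4-1 = r+3 by omega,
    show r+4-2 = r+2 by omega, show r+4-3 = r+1 by omega]
  have id1 : (r+4)*(r+3)*Nat.choose (m+4) (r+4) = (m+4)*(m+3)*Nat.choose (m+2) (r+2) := by
    have h := choose_id (m+2) (r+2)
    rw [show r+2+1+1 = r+4 by omega, show r+2+1 = r+3 by omega,
      show m+2+1+1 = m+4 by omega, show m+2+1 = m+3 by omega] at h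
    exact h
  have id2 : (r+2)*(r+1)*Nat.choose (m+2) (r+2) = (m+2)*(m+1)*Nat.choose m r := by
    have h := choose_id m r
    rw [show r+1+1 = r+2 by omega, show m+1+1 = m+2 by omega] at h
    exact h
  set e := (Efull A b).card
  set X := (crossSet (HM A) (Efull (A := A) b)).card
  set C2 := Nat.choose (m+2) (r+2) with hC2
  set Cnk := Nat.choose (m+4) (r+4) with hCnk
  set C4 := Nat.choose m r with hC4
  have hC2pos : 0 < C2 := Nat.choose_pos (by omega)
  have key : (e * ((r+3)*((m+2)*(m+1)))) * ((r+4)*C2) ≤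
      (4*((m+4)*((m+3)*((m+2)*(m+1)))) + ((m+4)*(m+4))*((r+3)*((r+2)*(r+1)))) * ((r+4)*C2) := by
    calc (e * ((r+3)*((m+2)*(m+1)))) * ((r+4)*C2)
        = (e*C2) * ((r+4)*(r+3)*((m+2)*(m+1))) := by ring
      _ ≤ (4*(r+4)*Cnk + X*C4) * ((r+4)*(r+3)*((m+2)*(m+1))) :=
          Nat.mul_le_mul_right _ hmas
      _ = 4*(r+4)*((m+2)*(m+1))*((r+4)*(r+3)*Cnk)
            + X*((r+4)*(r+3))*((m+2)*(m+1)*C4) := by ring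
      _ = 4*(r+4)*((m+2)*(m+1))*((m+4)*(m+3)*C2)
            + X*((r+4)*(r+3))*((r+2)*(r+1)*C2) := by rw [id1, ← id2]
      _ ≤ 4*(r+4)*((m+2)*(m+1))*((m+4)*(m+3)*C2)
            + ((m+4)*(m+4))*((r+4)*(r+3))*((r+2)*(r+1)*C2) :=
          Nat.add_le_add_left (Nat.mul_le_mul_right _ (Nat.mul_le_mul_right _ hX)) _
      _ = (4*((m+4)*((m+3)*((m+2)*(m+1)))) + ((m+4)*(m+4))*((r+3)*((r+2)*(r+1)))) * ((r+4)*C2) := by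
          ring
  exact Nat.le_of_mul_le_mul_right key (Nat.mul_pos (by omega) hC2pos)

lemma pow64 : ((64:ℝ))^((2:ℝ)/3) = 16 := by
  rw [show (64:ℝ) = 4^(3:ℕ) by norm_num, ← Real.rpow_natCast 4 3,
    ← Real.rpow_mul (by norm_num : (0:ℝ) ≤ 4),
    show ((3:ℕ):ℝ) * ((2:ℝ)/3) = 2 by push_cast; ring,
    show (2:ℝ) = ((2:ℕ):ℝ) by norm_num, Real.rpow_natCast]
  norm_num

end

end Stmt4

set_option maxHeartbeats 2000000 in
/-- the multiplicity of any value b in an n-by-n totally positive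
matrix is O(n^{4/3}). -/
theorem stmt_4 : ∃ C : ℝ, 0 < C ∧ ∀ n : ℕ, 1 ≤ n →
    ∀ A : Matrix (Fin n) (Fin n) ℝ, TotallyPositive A → ∀ b : ℝ,
      ((Finset.univ.filter fun q : Fin n × Fin n => A q.1 q.2 = b).card : ℝ)
        ≤ C * (n : ℝ) ^ ((4 : ℝ) / 3) := by
  classical
  refine ⟨16, by norm_num, ?_⟩
  intro n hn A hTP b
  have hn0 : (0:ℝ) < n := by exact_mod_cast hn
  have hy0 : (0:ℝ) ≤ (n:ℝ)^((4:ℝ)/3) := Real.rpow_nonneg (Nat.cast_nonneg n) _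
  by_cases hsmall : n < 64
  · -- small case: trivial bound n² ≤ 16 n^{4/3}
    have hcard : (Finset.univ.filter fun q : Fin n × Fin n => A q.1 q.2 = b).card ≤ n * n := by
      calc (Finset.univ.filter fun q : Fin n × Fin n => A q.1 q.2 = b).card
          ≤ (Finset.univ : Finset (Fin n × Fin n)).card := Finset.card_filter_le _ _
        _ = n * n := by simp [Finset.card_univ]
    have h1 : ((Finset.univ.filter fun q : Fin n × Fin n => A q.1 q.2 = b).card : ℝ)
        ≤ (n:ℝ) * n := by exact_mod_cast hcard
    have hx : (n:ℝ)^((2:ℝ)/3) ≤ 16 := by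
      rw [← Stmt4.pow64]
      exact Real.rpow_le_rpow (Nat.cast_nonneg n)
        (by exact_mod_cast hsmall.le : (n:ℝ) ≤ 64) (by norm_num)
    have hsplit : (n:ℝ) * n = (n:ℝ)^((2:ℝ)/3) * (n:ℝ)^((4:ℝ)/3) := by
      rw [← Real.rpow_add hn0, show (2:ℝ)/3 + 4/3 = 2 by norm_num,
        show (2:ℝ) = ((2:ℕ):ℝ) by norm_num, Real.rpow_natCast]
      ring
    calc ((Finset.univ.filter fun q : Fin n × Fin n => A q.1 q.2 = b).card : ℝ)
        ≤ (n:ℝ) * n := h1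
      _ = (n:ℝ)^((2:ℝ)/3) * (n:ℝ)^((4:ℝ)/3) := hsplit
      _ ≤ 16 * (n:ℝ)^((4:ℝ)/3) := mul_le_mul_of_nonneg_right hx hy0
  · push_neg at hsmall
    have hn64 : (64:ℝ) ≤ n := by exact_mod_cast hsmall
    set x := (n:ℝ)^((2:ℝ)/3) with hxdef
    have hx0 : (0:ℝ) ≤ x := Real.rpow_nonneg (Nat.cast_nonneg n) _
    have hx16 : (16:ℝ) ≤ x := by
      rw [hxdef, ← Stmt4.pow64]
      exact Real.rpow_le_rpow (by norm_num) hn64 (by norm_num)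
    obtain ⟨k, hkdef⟩ : ∃ k' : ℕ, k' = ⌊x⌋₊ + 2 := ⟨⌊x⌋₊ + 2, rfl⟩
    have hfl : (16:ℕ) ≤ ⌊x⌋₊ := Nat.le_floor (by exact_mod_cast hx16)
    have hk4 : 4 ≤ k := by omega
    have hk18 : (18:ℝ) ≤ (k:ℝ) := by
      have h18 : (18:ℕ) ≤ k := by omega
      exact_mod_cast h18
    have hkx1 : x ≤ (k:ℝ) - 1 := by
      have h := (Nat.lt_floor_add_one x).le
      rw [hkdef]
      push_cast
      linarith
    have hkx2 : (k:ℝ) ≤ x + 2 := by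
      have h := Nat.floor_le hx0
      rw [hkdef]
      push_cast
      linarith
    have hx3 : x^(3:ℕ) = (n:ℝ)^(2:ℕ) := by
      rw [hxdef, ← Real.rpow_natCast ((n:ℝ)^((2:ℝ)/3)) 3,
        ← Real.rpow_mul (Nat.cast_nonneg n),
        show ((2:ℝ)/3) * ((3:ℕ):ℝ) = ((2:ℕ):ℝ) by push_cast; ring,
        Real.rpow_natCast]
    have h2x : 2*x ≤ (n:ℝ) := by
      have hcube : (2*x)^(3:ℕ) ≤ (n:ℝ)^(3:ℕ) := by
        calc (2*x)^(3:ℕ) = 8 * x^(3:ℕ) := by ring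
          _ = 8 * (n:ℝ)^(2:ℕ) := by rw [hx3]
          _ ≤ (n:ℝ)^(3:ℕ) := by nlinarith
      exact le_of_pow_le_pow_left₀ (by norm_num) (Nat.cast_nonneg n) hcube
    have hkn : k ≤ n := by
      have hkr : (k:ℝ) ≤ (n:ℝ) := by linarith
      exact_mod_cast hkr
    have hxx : x * x = (n:ℝ)^((4:ℝ)/3) := by
      rw [hxdef, ← Real.rpow_add hn0, show (2:ℝ)/3 + 2/3 = 4/3 by norm_num]
    have hnx : (n:ℝ)^((4:ℝ)/3) * x = (n:ℝ) * n := by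
      rw [hxdef, ← Real.rpow_add hn0, show (4:ℝ)/3 + 2/3 = 2 by norm_num,
        show (2:ℝ) = ((2:ℕ):ℝ) by norm_num, Real.rpow_natCast]
      ring
    have hmn := Stmt4.master_nat (b := b) hTP hk4 hkn
    set e := (Stmt4.Efull A b).card with hedef
    have hcast : (e:ℝ) * (((k:ℝ)-1) * (((n:ℝ)-2) * ((n:ℝ)-3))) ≤
        4*((n:ℝ)*(((n:ℝ)-1)*(((n:ℝ)-2)*((n:ℝ)-3)))) +
          ((n:ℝ)*(n:ℝ)) * (((k:ℝ)-1)*(((k:ℝ)-2)*((k:ℝ)-3))) := by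
      have h := (Nat.cast_le (α := ℝ)).mpr hmn
      push_cast [Nat.cast_sub (show 1 ≤ k by omega), Nat.cast_sub (show 2 ≤ k by omega),
        Nat.cast_sub (show 3 ≤ k by omega), Nat.cast_sub (show 1 ≤ n by omega),
        Nat.cast_sub (show 2 ≤ n by omega), Nat.cast_sub (show 3 ≤ n by omega)] at h
      exact h
    set y := (n:ℝ)^((4:ℝ)/3) with hydef
    have hk1 : (0:ℝ) ≤ (k:ℝ) - 1 := by linarith
    have hD : (0:ℝ) < ((k:ℝ)-1) * (((n:ℝ)-2) * ((n:ℝ)-3)) :=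
      mul_pos (by linarith) (mul_pos (by linarith) (by linarith))
    have hbound : (e:ℝ) ≤ 8 * y := by
      rw [← mul_le_mul_iff_left₀ hD]
      have e1 : (n:ℝ)*(n:ℝ) ≤ y * ((k:ℝ)-1) := by
        rw [← hnx]
        exact mul_le_mul_of_nonneg_left hkx1 hy0
      have e2 : ((k:ℝ)-2)*((k:ℝ)-3) ≤ y := by
        rw [← hxx]
        exact mul_le_mul (by linarith) (by linarith) (by linarith) hx0
      have e3 : (n:ℝ)*(n:ℝ) ≤ 4*(((n:ℝ)-2)*((n:ℝ)-3)) := by nlinarith [hn64]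
      have t1 : 4*((n:ℝ)*(((n:ℝ)-1)*(((n:ℝ)-2)*((n:ℝ)-3)))) ≤
          4*y*(((k:ℝ)-1)*(((n:ℝ)-2)*((n:ℝ)-3))) := by
        have a1 : (n:ℝ)*((n:ℝ)-1) ≤ (n:ℝ)*(n:ℝ) :=
          mul_le_mul_of_nonneg_left (by linarith) (le_of_lt hn0)
        have a2 : (n:ℝ)*((n:ℝ)-1) ≤ y*((k:ℝ)-1) := le_trans a1 e1
        calc 4*((n:ℝ)*(((n:ℝ)-1)*(((n:ℝ)-2)*((n:ℝ)-3))))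
            = (4*((n:ℝ)*((n:ℝ)-1)))*(((n:ℝ)-2)*((n:ℝ)-3)) := by ring
          _ ≤ (4*(y*((k:ℝ)-1)))*(((n:ℝ)-2)*((n:ℝ)-3)) := by
              apply mul_le_mul_of_nonneg_right _
                (mul_nonneg (by linarith) (by linarith) : (0:ℝ) ≤ ((n:ℝ)-2)*((n:ℝ)-3))
              linarith
          _ = 4*y*(((k:ℝ)-1)*(((n:ℝ)-2)*((n:ℝ)-3))) := by ring
      have t2 : ((n:ℝ)*(n:ℝ))*(((k:ℝ)-1)*(((k:ℝ)-2)*((k:ℝ)-3))) ≤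
          4*y*(((k:ℝ)-1)*(((n:ℝ)-2)*((n:ℝ)-3))) := by
        have b1 : (0:ℝ) ≤ ((k:ℝ)-2)*((k:ℝ)-3) :=
          mul_nonneg (by linarith) (by linarith)
        have b2 : (0:ℝ) ≤ 4*(((n:ℝ)-2)*((n:ℝ)-3)) :=
          mul_nonneg (by norm_num) (mul_nonneg (by linarith) (by linarith))
        calc ((n:ℝ)*(n:ℝ))*(((k:ℝ)-1)*(((k:ℝ)-2)*((k:ℝ)-3)))
            = ((k:ℝ)-1)*(((n:ℝ)*(n:ℝ))*(((k:ℝ)-2)*((k:ℝ)-3))) := by ring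
          _ ≤ ((k:ℝ)-1)*((4*(((n:ℝ)-2)*((n:ℝ)-3)))*y) := by
              apply mul_le_mul_of_nonneg_left _ hk1
              exact mul_le_mul e3 e2 b1 b2
          _ = 4*y*(((k:ℝ)-1)*(((n:ℝ)-2)*((n:ℝ)-3))) := by ring
      calc (e:ℝ) * (((k:ℝ)-1) * (((n:ℝ)-2) * ((n:ℝ)-3)))
          ≤ 4*((n:ℝ)*(((n:ℝ)-1)*(((n:ℝ)-2)*((n:ℝ)-3)))) +
              ((n:ℝ)*(n:ℝ)) * (((k:ℝ)-1)*(((k:ℝ)-2)*((k:ℝ)-3))) := hcast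
        _ ≤ 8*y*(((k:ℝ)-1)*(((n:ℝ)-2)*((n:ℝ)-3))) := by linarith
        _ = 8 * y * (((k:ℝ)-1) * (((n:ℝ)-2) * ((n:ℝ)-3))) := by ring
    have hm := Stmt4.m_le_e A b
    have hn43 : (n:ℝ) ≤ y := by
      rw [hydef]
      nth_rewrite 1 [← Real.rpow_one (n:ℝ)]
      exact Real.rpow_le_rpow_of_exponent_le (by exact_mod_cast hn) (by norm_num)
    calc ((Finset.univ.filter fun q : Fin n × Fin n => A q.1 q.2 = b).card : ℝ)
        ≤ (e:ℝ) + n := by exact_mod_cast hm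
      _ ≤ 8*y + y := by linarith
      _ ≤ 16 * (n:ℝ)^((4:ℝ)/3) := by rw [← hydef]; linarith [hy0]
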